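/- arXiv:2110.00285 — 3 statements merged into one kernel-verified Lean document; each statement's English description precedes it below -/
import Mathlib

section
/- If all diagonal entries of P ∈ ℝ_max^{n×n} are equal to 0 and the graph G(P) has no circuit of positive weight, then adj(P) = P*. -/
open Filter

noncomputable section

/-- The max-plus semiring ℝ_max = ℝ ∪ {ε}, with ε = ⊥ = −∞,
`a ⊕ b = max a b` and `a ⊗ b = a + b` (the `Add` of `WithBot ℝ`). -/
abbrev RMax : Type := WithBot ℝ

/-- Max-plus vectors. -/
abbrev Vec (ι : Type) : Type := ι → RMax

/-- The max-plus zero vector ℰ. -/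
def zeroV (ι : Type) : Vec ι := fun _ => (⊥ : RMax)

/-- Max-plus "negation" (inversion for ⊗), fixing ⊥. -/
def mpNeg (a : RMax) : RMax := WithBot.map (fun r : ℝ => -r) a

section Defs

variable {ι κ₁ κ₂ κ₃ : Type}

/-- Matrix (or vector) sum `M ⊕ N`, entrywise max. -/
def mpAddM (M N : Matrix κ₁ κ₂ RMax) : Matrix κ₁ κ₂ RMax := fun i j => max (M i j) (N i j)

/-- Scalar multiplication `l ⊗ M` of a matrix. -/
def smulM (l : RMax) (M : Matrix κ₁ κ₂ RMax) : Matrix κ₁ κ₂ RMax := fun i j => l + M i j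

/-- Scalar multiplication `l ⊗ x` of a vector. -/
def smulV (l : RMax) (x : Vec ι) : Vec ι := fun i => l + x i

/-- Max-plus matrix product `M ⊗ N`. -/
def mpMul [Fintype κ₂] (M : Matrix κ₁ κ₂ RMax) (N : Matrix κ₂ κ₃ RMax) : Matrix κ₁ κ₃ RMax :=
  fun i j => Finset.univ.sup fun k => M i k + N k j

/-- Max-plus matrix-vector product `M ⊗ x`. -/
def mpMulVec [Fintype κ₂] (M : Matrix κ₁ κ₂ RMax) (x : Vec κ₂) : Vec κ₁ :=
  fun i => Finset.univ.sup fun j => M i j + x j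

/-- The max-plus identity matrix `E_n` (0 on the diagonal, ε elsewhere). -/
def mpId [DecidableEq ι] : Matrix ι ι RMax := fun i j => if i = j then (0 : RMax) else ⊥

/-- Max-plus inverse of a generalized permutation matrix:
the transpose with the finite entries negated. -/
def genInv (P : Matrix ι ι RMax) : Matrix ι ι RMax := fun i j => mpNeg (P j i)

/-- The max-plus determinant `det A = ⊕_π ⊗_i a_{i π(i)}`. -/
def mpDet [Fintype ι] [DecidableEq ι] (A : Matrix ι ι RMax) : RMax :=
  Finset.univ.sup fun π : Equiv.Perm ι => ∑ i, A i (π i)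

/-- Max-plus matrix powers. -/
def mpPow [Fintype ι] [DecidableEq ι] (P : Matrix ι ι RMax) : ℕ → Matrix ι ι RMax
  | 0 => mpId
  | k + 1 => mpMul P (mpPow P k)

/-- The Kleene star `P* = E ⊕ P ⊕ P^{⊗2} ⊕ ⋯ ⊕ P^{⊗(n−1)}`. -/
def mpStar [Fintype ι] [DecidableEq ι] (P : Matrix ι ι RMax) : Matrix ι ι RMax :=
  fun i j => (Finset.range (Fintype.card ι)).sup fun k => mpPow P k i j

/-- A multi-circuit on the vertex set `ι`: a union of vertex-disjoint elementary circuits,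
encoded by its vertex set `verts` together with the successor permutation `perm`,
which is the identity outside `verts`.  Its edge set is `{(i, perm i) | i ∈ verts}`
and its length is `verts.card`. -/
structure MultiCircuit (ι : Type) where
  verts : Finset ι
  perm : Equiv.Perm ι
  fixes : ∀ i, i ∉ verts → perm i = i

/-- The weight `w(C)` of a multi-circuit with respect to the matrix `A`. -/
def mcWeight (A : Matrix ι ι RMax) (C : MultiCircuit ι) : RMax :=
  ∑ i ∈ C.verts, A i (C.perm i)

/-- The multi-circuit `C` lies in the graph `G(A)` (all its edges have weight ≠ ε). -/
def InGraph (A : Matrix ι ι RMax) (C : MultiCircuit ι) : Prop :=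
  ∀ i ∈ C.verts, A i (C.perm i) ≠ ⊥

/-- A multi-circuit consisting of a single (elementary) circuit. -/
def IsCircuit (C : MultiCircuit ι) : Prop :=
  C.verts.Nonempty ∧ ∀ i ∈ C.verts, ∀ j ∈ C.verts, C.perm.SameCycle i j

/-- `D` is a critical circuit of `G(A)`: an elementary circuit of `G(A)` whose average
weight is maximal among all elementary circuits of `G(A)`
(averages `w/ℓ` are compared without division via `ℓ' • w ≥ ℓ • w'`). -/
def IsCritical (A : Matrix ι ι RMax) (D : MultiCircuit ι) : Prop :=
  IsCircuit D ∧ InGraph A D ∧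
    ∀ D' : MultiCircuit ι, IsCircuit D' → InGraph A D' →
      D.verts.card • mcWeight A D' ≤ D'.verts.card • mcWeight A D

/-- `ρ` is the maximum average weight of the (elementary) circuits of `G(A)`,
taken to be ε if `G(A)` has no circuit. -/
def IsMaxCycleMean (A : Matrix ι ι RMax) (ρ : RMax) : Prop :=
  (∀ D : MultiCircuit ι, IsCircuit D → InGraph A D → mcWeight A D ≤ D.verts.card • ρ) ∧
    ((∃ D : MultiCircuit ι, IsCircuit D ∧ InGraph A D ∧ mcWeight A D = D.verts.card • ρ) ∨
      (ρ = ⊥ ∧ ∀ D : MultiCircuit ι, IsCircuit D → ¬InGraph A D))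

/-- `l` is a (geometric) eigenvalue of `A`: `A ⊗ x = l ⊗ x` for some `x ≠ ℰ`. -/
def IsEigen [Fintype ι] (A : Matrix ι ι RMax) (l : RMax) : Prop :=
  ∃ x : Vec ι, x ≠ zeroV ι ∧ mpMulVec A x = smulV l x

variable [Fintype ι] [DecidableEq ι]

/-- The value `w(C) ⊗ l^{⊗(n − ℓ(C))}` of the term of `χ_A(l)` corresponding to the
multi-circuit `C`. -/
def ValAt (A : Matrix ι ι RMax) (C : MultiCircuit ι) (l : RMax) : RMax :=
  mcWeight A C + (Fintype.card ι - C.verts.card) • l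

/-- `C` is `μ`-maximal (for a real `μ`): it attains
`χ_A(μ) = max_C (w(C) + (n − ℓ(C))·μ)`. -/
def MaximalAt (A : Matrix ι ι RMax) (C : MultiCircuit ι) (μ : ℝ) : Prop :=
  ∀ C' : MultiCircuit ι, ValAt A C' (μ : RMax) ≤ ValAt A C (μ : RMax)

/-- `C` is `l`-maximal, for `l ∈ ℝ_max`; for `l = ε` this means `μ`-maximal for all
sufficiently small real `μ`. -/
def IsLamMax (A : Matrix ι ι RMax) (C : MultiCircuit ι) (l : RMax) : Prop :=
  (∀ μ : ℝ, l = (μ : RMax) → MaximalAt A C μ) ∧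
    (l = ⊥ → ∃ μ₀ : ℝ, ∀ μ : ℝ, μ ≤ μ₀ → MaximalAt A C μ)

/-- `l` is an algebraic eigenvalue of `A`, i.e. a root of the characteristic polynomial
`χ_A(t)`: a real `l` is a root iff there are two `l`-maximal multi-circuits of different
lengths, and `ε` is a root iff `G(A)` contains no multi-circuit of length `n`. -/
def IsAlgEigen (A : Matrix ι ι RMax) (l : RMax) : Prop :=
  (l ≠ ⊥ ∧ ∃ C C' : MultiCircuit ι, IsLamMax A C l ∧ IsLamMax A C' l ∧
      C.verts.card ≠ C'.verts.card) ∨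
    (l = ⊥ ∧ ∀ C : MultiCircuit ι, C.verts.card = Fintype.card ι → ¬InGraph A C)

open Classical in
/-- The multiplicity of `l` as a root of the characteristic polynomial `χ_A(t)`:
for a real `l` it is the difference between the maximal and the minimal length of an
`l`-maximal multi-circuit; for `l = ε` it is `n` minus the maximal length of a
multi-circuit of `G(A)`.  It is `0` when `l` is not a root. -/
noncomputable def rootMult (A : Matrix ι ι RMax) (l : RMax) : ℕ :=
  if l = ⊥ then
    Fintype.card ι - sSup {m : ℕ | ∃ C : MultiCircuit ι, InGraph A C ∧ C.verts.card = m}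
  else
    sSup {m : ℕ | ∃ C : MultiCircuit ι, IsLamMax A C l ∧ C.verts.card = m} -
      sInf {m : ℕ | ∃ C : MultiCircuit ι, IsLamMax A C l ∧ C.verts.card = m}

/-- The matrix `A_C`. -/
def matC (A : Matrix ι ι RMax) (C : MultiCircuit ι) : Matrix ι ι RMax :=
  fun i j => if i ∈ C.verts ∧ j = C.perm i then A i j else ⊥

/-- The matrix `A_{∖C}`. -/
def matNotC (A : Matrix ι ι RMax) (C : MultiCircuit ι) : Matrix ι ι RMax :=
  fun i j => if i ∈ C.verts ∧ j = C.perm i then ⊥ else A i j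

/-- The diagonal matrix `E_C`. -/
def eC (C : MultiCircuit ι) : Matrix ι ι RMax :=
  fun i j => if i = j ∧ i ∈ C.verts then (0 : RMax) else ⊥

/-- The diagonal matrix `E_{∖C}`. -/
def eNotC (C : MultiCircuit ι) : Matrix ι ι RMax :=
  fun i j => if i = j ∧ i ∉ C.verts then (0 : RMax) else ⊥

/-- `W(A,l,C) = {x : (A_{∖C} ⊕ l ⊗ E_C) ⊗ x = (A_C ⊕ l ⊗ E_{∖C}) ⊗ x}`. -/
def WAC (A : Matrix ι ι RMax) (l : RMax) (C : MultiCircuit ι) : Set (Vec ι) :=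
  {x | mpMulVec (mpAddM (matNotC A C) (smulM l (eC C))) x =
       mpMulVec (mpAddM (matC A C) (smulM l (eNotC C))) x}

/-- `B_{A,l,C} = (A_C ⊕ l ⊗ E_{∖C})^{−1} ⊗ (A_{∖C} ⊕ l ⊗ E_C)`. -/
def Bmat (A : Matrix ι ι RMax) (l : RMax) (C : MultiCircuit ι) : Matrix ι ι RMax :=
  mpMul (genInv (mpAddM (matC A C) (smulM l (eNotC C)))) (mpAddM (matNotC A C) (smulM l (eC C)))

/-- Assumption (★): for each `l ∈ ℝ_max`, any two distinct `l`-maximal multi-circuits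
of `G(A)` have different lengths. -/
def StarAssumption (A : Matrix ι ι RMax) : Prop :=
  ∀ l : RMax, ∀ C C' : MultiCircuit ι, IsLamMax A C l → IsLamMax A C' l →
    C.verts.card = C'.verts.card → C = C'

/-- The perturbed matrix `A(ζ;δ)` with entries `a_{ij} − ζ_{ij}·δ` (ε stays ε). -/
def perturb (A : Matrix ι ι RMax) (ζ : Matrix ι ι ℝ) (δ : ℝ) : Matrix ι ι RMax :=
  fun i j => A i j + ((-(ζ i j * δ) : ℝ) : RMax)

/-- The set `Z` of perturbation directions `ζ ∈ [0,1]^{n×n}` for which `A(ζ;δ)`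
satisfies (★) for all sufficiently small `δ > 0`. -/
def Zset (A : Matrix ι ι RMax) : Set (Matrix ι ι ℝ) :=
  {ζ | (∀ i j, ζ i j ∈ Set.Icc (0 : ℝ) 1) ∧
    ∃ δ' : ℝ, 0 < δ' ∧ ∀ δ : ℝ, 0 < δ → δ < δ' → StarAssumption (perturb A ζ δ)}

/-- The interval `B(l, r) = [l − r, l + r] ⊆ ℝ_max` (and `B(ε, r) = {ε}`). -/
def mpBall (l : RMax) (r : ℝ) : Set RMax :=
  {l' | (l = ⊥ ∧ l' = ⊥) ∨ ∃ x y : ℝ, l = (x : RMax) ∧ l' = (y : RMax) ∧ |y - x| ≤ r}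

/-- Convergence in `ℝ_max` as `δ → +0`. -/
def RMaxTendsto (f : ℝ → RMax) (a : RMax) : Prop :=
  (a = ⊥ → ∀ M : ℝ, ∀ᶠ δ in nhdsWithin 0 (Set.Ioi (0 : ℝ)), f δ < (M : RMax)) ∧
    (∀ x : ℝ, a = (x : RMax) → ∀ ε : ℝ, 0 < ε →
      ∀ᶠ δ in nhdsWithin 0 (Set.Ioi (0 : ℝ)), ∃ y : ℝ, f δ = (y : RMax) ∧ |y - x| < ε)

/-- The (max-plus) sum `⊕_k U_k` of a family of subsets of `ℝ_max^n`. -/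
def setSum {κ : Type} (U : κ → Set (Vec ι)) : Set (Vec ι) :=
  {x | ∃ s : Finset κ, ∃ f : κ → Vec ι, (∀ k ∈ s, f k ∈ U k) ∧
    x = fun i => s.sup fun k => f k i}

/-- The limit `lim_{δ→+0} S(δ)` of a parametrized family of subsets of `ℝ_max^n`. -/
def setLim (S : ℝ → Set (Vec ι)) : Set (Vec ι) :=
  {x | ∃ g : ℝ → Vec ι, (∀ δ : ℝ, 0 < δ → g δ ∈ S δ) ∧
    ∀ i : ι, RMaxTendsto (fun δ => g δ i) (x i)}

/-- The sum `⊕_{l' ∈ S} W(A', l', C_{l'})`, where `C_{l'}` is an `l'`-maximal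
multi-circuit of `G(A')`. -/
def perturbSum (A' : Matrix ι ι RMax) (S : Set RMax) : Set (Vec ι) :=
  setSum fun l : S =>
    {x | ∃ C : MultiCircuit ι, IsLamMax A' C (l : RMax) ∧ x ∈ WAC A' (l : RMax) C}

/-- The algebraic eigenspace
`W(A,l) = ⋂_{ζ∈Z} lim_{δ→+0} ⊕_{l' ∈ B(l,nδ)} W(A(ζ;δ), l', C_{l'}(ζ;δ))`. -/
def algEigenspace (A : Matrix ι ι RMax) (l : RMax) : Set (Vec ι) :=
  ⋂ ζ ∈ Zset A, setLim fun δ => perturbSum (perturb A ζ δ) (mpBall l (Fintype.card ι * δ))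

/-- The max-plus span of a set of vectors: all finite max-plus linear combinations. -/
def mpSpan (S : Set (Vec ι)) : Set (Vec ι) :=
  {x | ∃ s : Finset (Vec ι), ↑s ⊆ S ∧ ∃ c : Vec ι → RMax,
    x = fun i => s.sup fun v => c v + v i}

/-- `B` is a basis of `U`: a minimal spanning set. -/
def IsBasis (B U : Set (Vec ι)) : Prop :=
  mpSpan B = U ∧ ∀ B' : Set (Vec ι), B' ⊆ B → mpSpan B' = U → B' = B

/-- Tropical orthogonality: the maximum in `ᵗx ⊗ y = ⊕_i x_i ⊗ y_i` is attained
at least twice (a maximum equal to ε counting as attained by all indices). -/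
def Orthogonal (x y : Vec ι) : Prop :=
  (Finset.univ.sup fun i => x i + y i) = ⊥ ∨
    ∃ i j : ι, i ≠ j ∧ x i + y i = (Finset.univ.sup fun k => x k + y k) ∧
      x j + y j = (Finset.univ.sup fun k => x k + y k)

/-- The tropical kernel of a matrix: vectors for which, in every row, the maximum is
attained at least twice (a maximum equal to ε counting as attained by all indices). -/
def tropKernel {κ : Type} (A : Matrix κ ι RMax) : Set (Vec ι) :=
  {x | ∀ i : κ, (Finset.univ.sup fun j => A i j + x j) = ⊥ ∨
    ∃ j k : ι, j ≠ k ∧ A i j + x j = (Finset.univ.sup fun j' => A i j' + x j') ∧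
      A i k + x k = (Finset.univ.sup fun j' => A i j' + x j')}

/-- `A` is (tropically) nonsingular: the maximum in `det A` is attained by exactly
one permutation. -/
def Nonsingular (A : Matrix ι ι RMax) : Prop :=
  ∃! π : Equiv.Perm ι, (∑ i, A i (π i)) = mpDet A

/-- The minor `A^{(r,c)}`, deleting row `r` and column `c`. -/
def mpMinor {n : ℕ} (A : Matrix (Fin (n + 1)) (Fin (n + 1)) RMax) (r c : Fin (n + 1)) :
    Matrix (Fin n) (Fin n) RMax :=
  fun i j => A (r.succAbove i) (c.succAbove j)

/-- The max-plus adjugate, `adj(A)_{ij} = det A^{(j,i)}`. -/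
def mpAdj {n : ℕ} (A : Matrix (Fin (n + 1)) (Fin (n + 1)) RMax) :
    Matrix (Fin (n + 1)) (Fin (n + 1)) RMax :=
  fun i j => mpDet (mpMinor A j i)

/-- The submatrix `[A_C]_{KK}` with `K = V(C)`. -/
def subPC (A : Matrix ι ι RMax) (C : MultiCircuit ι) :
    Matrix {k // k ∈ C.verts} {k // k ∈ C.verts} RMax :=
  fun i j => matC A C i.1 j.1

/-- The submatrix `[A_{∖C}]_{KK}` with `K = V(C)`. -/
def subPNC (A : Matrix ι ι RMax) (C : MultiCircuit ι) :
    Matrix {k // k ∈ C.verts} {k // k ∈ C.verts} RMax :=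
  fun i j => matNotC A C i.1 j.1

/-- The matrix `M = [A_C]_{KK}^{−1} ⊗ [A_{∖C}]_{KK}`. -/
def xiM (A : Matrix ι ι RMax) (C : MultiCircuit ι) :
    Matrix {k // k ∈ C.verts} {k // k ∈ C.verts} RMax :=
  mpMul (genInv (subPC A C)) (subPNC A C)

/-- `M* ⊗ ([A_C]_{KK}^{−1} ⊗ [A]_{KL}) ⊗ [x]_L`, the `K`-part of `ξ_{A,C}(x)`. -/
def xiVec (A : Matrix ι ι RMax) (C : MultiCircuit ι) (x : Vec ι) : Vec {k // k ∈ C.verts} :=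
  mpMulVec (mpStar (xiM A C)) (mpMulVec (genInv (subPC A C))
    (fun k : {k // k ∈ C.verts} =>
      (Finset.univ.filter fun j : ι => j ∉ C.verts).sup fun j => A k.1 j + x j))

/-- The linear map `ξ_{A,C} : ℝ_max^n → ℝ_max^n`. -/
def xi (A : Matrix ι ι RMax) (C : MultiCircuit ι) (x : Vec ι) : Vec ι :=
  fun i => if h : i ∈ C.verts then xiVec A C x ⟨i, h⟩ else x i

end Defs

end


section AuxProof

open Finset

variable {n : ℕ}

private lemma rmax_sum_bot {α : Type} [DecidableEq α] {s : Finset α} {f : α → RMax} {a : α} (ha : a ∈ s)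
    (h : f a = ⊥) : (∑ x ∈ s, f x) = ⊥ := by
  rw [← Finset.add_sum_erase s f ha, h, WithBot.bot_add]

private lemma sum_succAbove_erase (f : Fin (n + 1) → RMax) (j : Fin (n + 1)) :
    (∑ a : Fin n, f (j.succAbove a)) = ∑ r ∈ Finset.univ.erase j, f r := by
  have himg : Finset.univ.erase j = Finset.univ.image j.succAbove := by
    ext x
    constructor
    · intro hx
      obtain ⟨a, ha⟩ := Fin.exists_succAbove_eq (Finset.mem_erase.1 hx).1
      exact Finset.mem_image.2 ⟨a, Finset.mem_univ a, ha⟩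
    · intro hx
      obtain ⟨a, -, rfl⟩ := Finset.mem_image.1 hx
      exact Finset.mem_erase.2 ⟨Fin.succAbove_ne j a, Finset.mem_univ _⟩
  rw [himg, Finset.sum_image (fun a _ b _ h => Fin.succAbove_right_injective h)]

private lemma perm_le_zero (P : Matrix (Fin (n + 1)) (Fin (n + 1)) RMax)
    (hdiag : ∀ i, P i i = (0 : RMax))
    (hcirc : ∀ D : MultiCircuit (Fin (n + 1)), IsCircuit D → InGraph P D → mcWeight P D ≤ 0)
    (τ : Equiv.Perm (Fin (n + 1))) (s : Finset (Fin (n + 1))) :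
    (∀ x ∈ s, τ x ∈ s) → (∑ r ∈ s, P r (τ r)) ≤ 0 := by
  classical
  induction s using Finset.strongInduction with
  | _ s ih =>
  intro hs
  rcases s.eq_empty_or_nonempty with rfl | ⟨x, hx⟩
  · simp
  by_cases hfix : τ x = x
  · have hsub : s.erase x ⊂ s := Finset.erase_ssubset hx
    have hinv : ∀ y ∈ s.erase x, τ y ∈ s.erase x := by
      intro y hy
      rcases Finset.mem_erase.1 hy with ⟨hyx, hys⟩
      exact Finset.mem_erase.2 ⟨fun h => hyx (τ.injective (h.trans hfix.symm)), hs y hys⟩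
    calc (∑ r ∈ s, P r (τ r)) = P x (τ x) + ∑ r ∈ s.erase x, P r (τ r) :=
          (Finset.add_sum_erase s _ hx).symm
      _ ≤ 0 + 0 := by
          rw [hfix, hdiag x]
          exact add_le_add le_rfl (ih _ hsub hinv)
      _ = 0 := add_zero 0
  · set o : Finset (Fin (n + 1)) := (τ.cycleOf x).support with ho
    have hxo : x ∈ o :=
      Equiv.Perm.mem_support_cycleOf_iff.2 ⟨Equiv.Perm.SameCycle.refl τ x,
        Equiv.Perm.mem_support.2 hfix⟩
    have hpow : ∀ t : ℕ, (τ ^ t) x ∈ s := by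
      intro t
      induction t with
      | zero => simpa using hx
      | succ t iht => rw [pow_succ', Equiv.Perm.mul_apply]; exact hs _ iht
    have hos : o ⊆ s := by
      intro y hy
      have hsc : τ.SameCycle x y := (Equiv.Perm.mem_support_cycleOf_iff.1 hy).1
      obtain ⟨t, -, ht⟩ := hsc.exists_pow_eq'
      exact ht ▸ hpow t
    have hoapp : ∀ y ∈ o, (τ.cycleOf x) y = τ y := by
      intro y hy
      rw [Equiv.Perm.cycleOf_apply, if_pos (Equiv.Perm.mem_support_cycleOf_iff.1 hy).1]
    have hsdiff : ∀ y ∈ s \ o, τ y ∈ s \ o := by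
      intro y hy
      rcases Finset.mem_sdiff.1 hy with ⟨hys, hyo⟩
      refine Finset.mem_sdiff.2 ⟨hs y hys, fun hmem => hyo ?_⟩
      have hsc := (Equiv.Perm.mem_support_cycleOf_iff.1 hmem).1
      exact Equiv.Perm.mem_support_cycleOf_iff.2
        ⟨Equiv.Perm.sameCycle_apply_right.1 hsc, Equiv.Perm.mem_support.2 hfix⟩
    have hssub : s \ o ⊂ s := Finset.sdiff_ssubset hos ⟨x, hxo⟩
    have horb : (∑ r ∈ o, P r (τ r)) ≤ 0 := by
      by_cases hbot : ∃ y ∈ o, P y (τ y) = ⊥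
      · obtain ⟨y, hy, hby⟩ := hbot
        rw [rmax_sum_bot hy hby]
        exact bot_le
      · push_neg at hbot
        set C : MultiCircuit (Fin (n + 1)) :=
          ⟨o, τ.cycleOf x, fun y hy => Equiv.Perm.notMem_support.1 hy⟩ with hC
        have hCc : IsCircuit C := by
          refine ⟨⟨x, hxo⟩, fun a ha b hb => ?_⟩
          exact (Equiv.Perm.isCycle_cycleOf τ hfix).sameCycle
            (Equiv.Perm.mem_support.1 ha) (Equiv.Perm.mem_support.1 hb)
        have hCg : InGraph P C := by
          intro y hy
          show P y ((τ.cycleOf x) y) ≠ ⊥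
          rw [hoapp y hy]
          exact hbot y hy
        have hmc : mcWeight P C = ∑ r ∈ o, P r (τ r) :=
          Finset.sum_congr rfl fun y hy => by rw [hoapp y hy]
        exact hmc ▸ hcirc C hCc hCg
    calc (∑ r ∈ s, P r (τ r)) = (∑ r ∈ s \ o, P r (τ r)) + ∑ r ∈ o, P r (τ r) :=
          (Finset.sum_sdiff hos).symm
      _ ≤ 0 + 0 := add_le_add (ih _ hssub hsdiff) horb
      _ = 0 := add_zero 0

private lemma walk_le_pow (P : Matrix (Fin (n + 1)) (Fin (n + 1)) RMax) :
    ∀ (k : ℕ) (g : ℕ → Fin (n + 1)),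
      (∑ m ∈ Finset.range k, P (g m) (g (m + 1))) ≤ mpPow P k (g 0) (g k) := by
  intro k
  induction k with
  | zero =>
    intro g
    simp [mpPow, mpId]
  | succ k ihk =>
    intro g
    have h2 := ihk (fun m => g (m + 1))
    calc (∑ m ∈ Finset.range (k + 1), P (g m) (g (m + 1)))
        = (∑ m ∈ Finset.range k, P (g (m + 1)) (g (m + 1 + 1))) + P (g 0) (g 1) :=
          Finset.sum_range_succ' _ k
      _ ≤ mpPow P k (g 1) (g (k + 1)) + P (g 0) (g 1) := add_le_add h2 le_rfl
      _ = P (g 0) (g 1) + mpPow P k (g 1) (g (k + 1)) := add_comm _ _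
      _ ≤ mpPow P (k + 1) (g 0) (g (k + 1)) :=
          Finset.le_sup (f := fun a => P (g 0) a + mpPow P k a (g (k + 1)))
            (Finset.mem_univ (g 1))

private lemma pow_eq_walk (P : Matrix (Fin (n + 1)) (Fin (n + 1)) RMax) :
    ∀ (k : ℕ) (i j : Fin (n + 1)),
      mpPow P k i j = ⊥ ∨ ∃ g : ℕ → Fin (n + 1), g 0 = i ∧ g k = j ∧
        mpPow P k i j = ∑ m ∈ Finset.range k, P (g m) (g (m + 1)) := by
  intro k
  induction k with
  | zero =>
    intro i j
    by_cases h : i = j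
    · subst h
      exact Or.inr ⟨fun _ => i, rfl, rfl, by simp [mpPow, mpId]⟩
    · exact Or.inl (by simp [mpPow, mpId, h])
  | succ k ihk =>
    intro i j
    obtain ⟨a, -, ha⟩ := Finset.exists_mem_eq_sup Finset.univ Finset.univ_nonempty
      (fun a => P i a + mpPow P k a j)
    have hpow : mpPow P (k + 1) i j = P i a + mpPow P k a j := ha
    rcases ihk a j with hb | ⟨g, hg0, hgk, hw⟩
    · exact Or.inl (by rw [hpow, hb, WithBot.add_bot])
    · refine Or.inr ⟨fun m => match m with | 0 => i | m' + 1 => g m', rfl, hgk, ?_⟩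
      rw [hpow, Finset.sum_range_succ'
        (fun m => P ((fun m => match m with | 0 => i | m' + 1 => g m') m)
          ((fun m => match m with | 0 => i | m' + 1 => g m') (m + 1))) k, hw, ← hg0]
      exact add_comm _ _

private lemma cut_walk (P : Matrix (Fin (n + 1)) (Fin (n + 1)) RMax) {c a b : ℕ}
    (g : ℕ → Fin (n + 1)) (hab : a < b) (hbc : b ≤ c) (hg : g a = g b) :
    ∃ g' : ℕ → Fin (n + 1), g' 0 = g 0 ∧ g' (c - (b - a)) = g c ∧
      (∑ m ∈ Finset.range c, P (g m) (g (m + 1))) =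
        (∑ m ∈ Finset.range (c - (b - a)), P (g' m) (g' (m + 1))) +
        (∑ m ∈ Finset.range (b - a), P (g (a + m)) (g (a + (m + 1)))) := by
  set d := b - a with hd
  set k' := c - d with hk'
  have hd1 : 1 ≤ d := by omega
  have hak : a ≤ k' := by omega
  have hb' : a + d = b := by omega
  refine ⟨fun m => if m < a then g m else g (m + d), ?_, ?_, ?_⟩
  · by_cases h : 0 < a
    · simp [h]
    · have ha0 : a = 0 := by omega
      have h2 : ¬ (0 < a) := by omega
      simp only [h2, if_false]
      have h3 : 0 + d = b := by omega
      rw [h3, ← hg, ha0]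
  · have h1 : ¬ k' < a := by omega
    simp only [h1, if_false]
    congr 1
    omega
  · set G : ℕ → Fin (n + 1) := fun m => if m < a then g m else g (m + d) with hG
    have hA : ∀ m ∈ Finset.Ico 0 a, P (G m) (G (m + 1)) = P (g m) (g (m + 1)) := by
      intro m hm
      rcases Finset.mem_Ico.1 hm with ⟨-, hma⟩
      have h1 : G m = g m := if_pos hma
      have h2 : G (m + 1) = g (m + 1) := by
        by_cases h : m + 1 < a
        · exact if_pos h
        · have hma1 : m + 1 = a := by omega
          have : G (m + 1) = g (m + 1 + d) := if_neg h
          rw [this]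
          have h4 : m + 1 + d = b := by omega
          rw [h4, ← hg, hma1]
      rw [h1, h2]
    have hB : ∀ m ∈ Finset.Ico a k', P (G m) (G (m + 1)) = P (g (m + d)) (g (m + d + 1)) := by
      intro m hm
      rcases Finset.mem_Ico.1 hm with ⟨ham, -⟩
      have h1 : G m = g (m + d) := if_neg (by omega)
      have h2 : G (m + 1) = g (m + d + 1) := by
        have : G (m + 1) = g (m + 1 + d) := if_neg (by omega)
        rw [this]
        congr 1
        omega
      rw [h1, h2]
    have e1 : (∑ m ∈ Finset.range k', P (G m) (G (m + 1))) =
        (∑ m ∈ Finset.Ico 0 a, P (g m) (g (m + 1))) +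
        (∑ m ∈ Finset.Ico b c, P (g m) (g (m + 1))) := by
      rw [Finset.range_eq_Ico, ← Finset.sum_Ico_consecutive _ (Nat.zero_le a) hak]
      congr 1
      · exact Finset.sum_congr rfl hA
      · rw [Finset.sum_congr rfl hB, Finset.sum_Ico_eq_sum_range,
          Finset.sum_Ico_eq_sum_range]
        have hcb : k' - a = c - b := by omega
        rw [hcb]
        refine Finset.sum_congr rfl fun m _ => ?_
        have h1 : a + m + d = b + m := by omega
        rw [h1]
    have e2 : (∑ m ∈ Finset.range c, P (g m) (g (m + 1))) =
        ((∑ m ∈ Finset.Ico 0 a, P (g m) (g (m + 1))) +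
         (∑ m ∈ Finset.Ico b c, P (g m) (g (m + 1)))) +
        (∑ m ∈ Finset.Ico a b, P (g m) (g (m + 1))) := by
      rw [Finset.range_eq_Ico, ← Finset.sum_Ico_consecutive _ (Nat.zero_le a)
        (le_trans (le_of_lt hab) hbc), ← Finset.sum_Ico_consecutive _ (le_of_lt hab) hbc]
      rw [add_comm (∑ m ∈ Finset.Ico a b, P (g m) (g (m + 1)))
        (∑ m ∈ Finset.Ico b c, P (g m) (g (m + 1))), ← add_assoc]
    have e3 : (∑ m ∈ Finset.Ico a b, P (g m) (g (m + 1))) =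
        ∑ m ∈ Finset.range d, P (g (a + m)) (g (a + (m + 1))) := by
      rw [Finset.sum_Ico_eq_sum_range]
      exact rfl
    rw [e2, e1, e3]

private lemma closed_walk (P : Matrix (Fin (n + 1)) (Fin (n + 1)) RMax)
    (hdiag : ∀ i, P i i = (0 : RMax))
    (hcirc : ∀ D : MultiCircuit (Fin (n + 1)), IsCircuit D → InGraph P D → mcWeight P D ≤ 0) :
    ∀ (c : ℕ) (g : ℕ → Fin (n + 1)), 1 ≤ c → g c = g 0 →
      (∑ m ∈ Finset.range c, P (g m) (g (m + 1))) ≤ 0 := by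
  intro c
  induction c using Nat.strong_induction_on with
  | _ c ih =>
  intro g hc hcg
  by_cases hcut : ∃ a b : ℕ, a < b ∧ b ≤ c ∧ b - a < c ∧ g a = g b
  · obtain ⟨a, b, hab, hbc, hlt, hg⟩ := hcut
    obtain ⟨g', hg'0, hg'k, hsum⟩ := cut_walk P g hab hbc hg
    rw [hsum]
    have hmid : (∑ m ∈ Finset.range (b - a), P (g (a + m)) (g (a + (m + 1)))) ≤ 0 :=
      ih (b - a) hlt (fun m => g (a + m)) (by omega) (by show g (a + (b - a)) = g (a + 0); rw [show a + (b - a) = b by omega, ← hg]; rfl)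
    have hout : (∑ m ∈ Finset.range (c - (b - a)), P (g' m) (g' (m + 1))) ≤ 0 :=
      ih (c - (b - a)) (by omega) g' (by omega) (by rw [hg'k, hcg, hg'0])
    calc _ ≤ (0 : RMax) + 0 := add_le_add hout hmid
      _ = 0 := add_zero 0
  · push_neg at hcut
    rcases eq_or_lt_of_le hc with hc1 | hc2
    · rw [← hc1, Finset.sum_range_one]
      have h10 : g 1 = g 0 := by rw [← hc1] at hcg; exact hcg
      show P (g 0) (g (0 + 1)) ≤ 0
      rw [show (0 : ℕ) + 1 = 1 from rfl, h10, hdiag]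
    · by_cases hbot : ∃ m ∈ Finset.range c, P (g m) (g (m + 1)) = ⊥
      · obtain ⟨m, hm, hbm⟩ := hbot
        rw [rmax_sum_bot hm hbm]
        exact bot_le
      · push_neg at hbot
        have hinj : ∀ x ∈ List.range c, ∀ y ∈ List.range c, g x = g y → x = y := by
          intro x hx y hy hgxy
          simp only [List.mem_range] at hx hy
          by_contra hne
          rcases Nat.lt_or_ge x y with h | h
          · exact hcut x y h (le_of_lt hy) (by omega) hgxy
          · have h2 : y < x := by omega
            exact hcut y x h2 (le_of_lt hx) (by omega) hgxy.symm
        set L : List (Fin (n + 1)) := (List.range c).map g with hLdef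
        have hL : L.Nodup := List.Nodup.map_on hinj (List.nodup_range (n := c))
        have hlen : L.length = c := by simp [hLdef]
        have h2L : 2 ≤ L.length := by omega
        have happly : ∀ m, m < c → L.formPerm (g m) = g ((m + 1) % c) := by
          intro m hm
          have hmL : m < L.length := by omega
          have h1 := List.formPerm_apply_getElem L hL m hmL
          have h2 : L[m]'hmL = g m := by simp [hLdef]
          rw [h2] at h1
          rw [h1]
          simp [hLdef]
        have hval : ∀ m, m < c → g ((m + 1) % c) = g (m + 1) := by
          intro m hm
          rcases Nat.lt_or_ge (m + 1) c with h | h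
          · rw [Nat.mod_eq_of_lt h]
          · have h2 : m + 1 = c := by omega
            rw [h2, Nat.mod_self]
            exact hcg.symm
        set V : Finset (Fin (n + 1)) := (Finset.range c).image g with hV
        have hmemV : ∀ x, x ∈ V ↔ ∃ m, m < c ∧ g m = x := by
          intro x
          simp [hV, Finset.mem_image]
        have hmemLV : ∀ x, x ∈ L ↔ x ∈ V := by
          intro x
          rw [hmemV]
          simp [hLdef, List.mem_map]
        have hfixV : ∀ x, x ∉ V → L.formPerm x = x := by
          intro x hx
          exact List.formPerm_apply_of_notMem (fun hxL => hx ((hmemLV x).1 hxL))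
        set C : MultiCircuit (Fin (n + 1)) := ⟨V, L.formPerm, hfixV⟩ with hC
        have hCc : IsCircuit C := by
          refine ⟨⟨g 0, (hmemV _).2 ⟨0, by omega, rfl⟩⟩, fun x hx y hy => ?_⟩
          exact (List.isCycle_formPerm hL h2L).sameCycle
            ((List.formPerm_apply_mem_ne_self_iff L hL x ((hmemLV x).2 hx)).2 h2L)
            ((List.formPerm_apply_mem_ne_self_iff L hL y ((hmemLV y).2 hy)).2 h2L)
        have hCg : InGraph P C := by
          intro x hx
          obtain ⟨m, hm, rfl⟩ := (hmemV x).1 hx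
          show P (g m) (L.formPerm (g m)) ≠ ⊥
          rw [happly m hm, hval m hm]
          exact hbot m (Finset.mem_range.2 hm)
        have hmc : mcWeight P C = ∑ m ∈ Finset.range c, P (g m) (g (m + 1)) := by
          show (∑ x ∈ V, P x (L.formPerm x)) = _
          rw [hV, Finset.sum_image (fun x hx y hy h =>
            hinj x (List.mem_range.2 (Finset.mem_range.1 hx))
              y (List.mem_range.2 (Finset.mem_range.1 hy)) h)]
          refine Finset.sum_congr rfl fun m hm => ?_
          rw [happly m (Finset.mem_range.1 hm), hval m (Finset.mem_range.1 hm)]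
        exact hmc ▸ hcirc C hCc hCg

private lemma adj_diag_ge (P : Matrix (Fin (n + 1)) (Fin (n + 1)) RMax)
    (hdiag : ∀ i, P i i = (0 : RMax)) (i : Fin (n + 1)) :
    (0 : RMax) ≤ mpAdj P i i := by
  have h1 : (∑ a : Fin n, mpMinor P i i a ((1 : Equiv.Perm (Fin n)) a)) = 0 := by
    refine Finset.sum_eq_zero fun a _ => ?_
    show P (i.succAbove a) (i.succAbove a) = 0
    exact hdiag _
  exact le_trans (le_of_eq h1.symm)
    (Finset.le_sup (f := fun π : Equiv.Perm (Fin n) => ∑ a, mpMinor P i i a (π a))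
      (Finset.mem_univ (1 : Equiv.Perm (Fin n))))

private lemma walk_le_adj (P : Matrix (Fin (n + 1)) (Fin (n + 1)) RMax)
    (hdiag : ∀ i, P i i = (0 : RMax))
    (hcirc : ∀ D : MultiCircuit (Fin (n + 1)), IsCircuit D → InGraph P D → mcWeight P D ≤ 0) :
    ∀ (k : ℕ) (g : ℕ → Fin (n + 1)),
      (∑ m ∈ Finset.range k, P (g m) (g (m + 1))) ≤ mpAdj P (g 0) (g k) := by
  intro k
  induction k using Nat.strong_induction_on with
  | _ k ih =>
  intro g
  rcases Nat.eq_zero_or_pos k with rfl | hk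
  · simpa using adj_diag_ge P hdiag (g 0)
  by_cases hcut : ∃ a b : ℕ, a < b ∧ b ≤ k ∧ g a = g b
  · obtain ⟨a, b, hab, hbk, hg⟩ := hcut
    obtain ⟨g', hg'0, hg'k, hsum⟩ := cut_walk P g hab hbk hg
    rw [hsum]
    have hmid : (∑ m ∈ Finset.range (b - a), P (g (a + m)) (g (a + (m + 1)))) ≤ 0 :=
      closed_walk P hdiag hcirc (b - a) (fun m => g (a + m)) (by omega)
        (by show g (a + (b - a)) = g (a + 0); rw [show a + (b - a) = b by omega, ← hg]; rfl)
    have hout := ih (k - (b - a)) (by omega) g'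
    rw [hg'0, hg'k] at hout
    calc (∑ m ∈ Finset.range (k - (b - a)), P (g' m) (g' (m + 1))) +
          (∑ m ∈ Finset.range (b - a), P (g (a + m)) (g (a + (m + 1))))
        ≤ mpAdj P (g 0) (g k) + 0 := add_le_add hout hmid
      _ = mpAdj P (g 0) (g k) := add_zero _
  · push_neg at hcut
    have hinj : ∀ x ∈ List.range (k + 1), ∀ y ∈ List.range (k + 1), g x = g y → x = y := by
      intro x hx y hy hgxy
      simp only [List.mem_range] at hx hy
      by_contra hne
      rcases Nat.lt_or_ge x y with h | h
      · exact hcut x y h (by omega) hgxy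
      · have h2 : y < x := by omega
        exact hcut y x (by omega) (by omega) hgxy.symm
    set L : List (Fin (n + 1)) := (List.range (k + 1)).map g with hLdef
    have hL : L.Nodup := List.Nodup.map_on hinj (List.nodup_range (n := k + 1))
    have hlen : L.length = k + 1 := by simp [hLdef]
    have happly : ∀ m, m < k + 1 → L.formPerm (g m) = g ((m + 1) % (k + 1)) := by
      intro m hm
      have hmL : m < L.length := by omega
      have h1 := List.formPerm_apply_getElem L hL m hmL
      have h2 : L[m]'hmL = g m := by simp [hLdef]
      rw [h2] at h1
      rw [h1]
      simp [hLdef]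
    set τ : Equiv.Perm (Fin (n + 1)) := L.formPerm with hτ
    have hji : τ (g k) = g 0 := by
      rw [happly k (by omega), Nat.mod_self]
    set V : Finset (Fin (n + 1)) := (Finset.range (k + 1)).image g with hV
    have hmemV : ∀ x, x ∈ V ↔ ∃ m, m < k + 1 ∧ g m = x := by
      intro x
      simp [hV, Finset.mem_image]
    have hmemLV : ∀ x, x ∈ L ↔ x ∈ V := by
      intro x
      rw [hmemV]
      simp [hLdef, List.mem_map]
    have hfixV : ∀ x, x ∉ V → τ x = x := by
      intro x hx
      exact List.formPerm_apply_of_notMem (fun hxL => hx ((hmemLV x).1 hxL))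
    have hjV : g k ∈ V := (hmemV _).2 ⟨k, by omega, rfl⟩
    have hVe : V.erase (g k) = (Finset.range k).image g := by
      ext x
      constructor
      · intro hx
        rcases Finset.mem_erase.1 hx with ⟨hxj, hxV⟩
        obtain ⟨m, hm, rfl⟩ := (hmemV x).1 hxV
        refine Finset.mem_image.2 ⟨m, Finset.mem_range.2 ?_, rfl⟩
        rcases Nat.lt_or_ge m k with h | h
        · exact h
        · exact absurd (congrArg g (by omega : m = k)) hxj
      · intro hx
        obtain ⟨m, hm, rfl⟩ := Finset.mem_image.1 hx
        have hmk : m < k := Finset.mem_range.1 hm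
        refine Finset.mem_erase.2 ⟨fun h => ?_, (hmemV _).2 ⟨m, by omega, rfl⟩⟩
        have := hinj m (List.mem_range.2 (by omega)) k (List.mem_range.2 (by omega)) h
        omega
    have h1 : (∑ r ∈ V.erase (g k), P r (τ r)) =
        ∑ m ∈ Finset.range k, P (g m) (g (m + 1)) := by
      rw [hVe, Finset.sum_image (fun x hx y hy h =>
        hinj x (List.mem_range.2 (by have := Finset.mem_range.1 hx; omega))
          y (List.mem_range.2 (by have := Finset.mem_range.1 hy; omega)) h)]
      refine Finset.sum_congr rfl fun m hm => ?_
      have hmk : m < k := Finset.mem_range.1 hm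
      rw [happly m (by omega), Nat.mod_eq_of_lt (by omega)]
    have h2 : (∑ r ∈ Finset.univ \ V, P r (τ r)) = 0 := by
      refine Finset.sum_eq_zero fun r hr => ?_
      rw [hfixV r (Finset.mem_sdiff.1 hr).2]
      exact hdiag r
    have hsplitU : Finset.univ.erase (g k) = (V.erase (g k)) ∪ (Finset.univ \ V) := by
      ext x
      constructor
      · intro hx
        have hxj := (Finset.mem_erase.1 hx).1
        by_cases hxV : x ∈ V
        · exact Finset.mem_union_left _ (Finset.mem_erase.2 ⟨hxj, hxV⟩)
        · exact Finset.mem_union_right _ (Finset.mem_sdiff.2 ⟨Finset.mem_univ _, hxV⟩)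
      · intro hx
        rcases Finset.mem_union.1 hx with hx | hx
        · exact Finset.mem_erase.2 ⟨(Finset.mem_erase.1 hx).1, Finset.mem_univ _⟩
        · refine Finset.mem_erase.2 ⟨fun h => ?_, Finset.mem_univ _⟩
          exact (Finset.mem_sdiff.1 hx).2 (h ▸ hjV)
    have hdisj : Disjoint (V.erase (g k)) (Finset.univ \ V) :=
      Finset.disjoint_left.2 fun x hx hx' =>
        (Finset.mem_sdiff.1 hx').2 (Finset.mem_of_mem_erase hx)
    have htot : (∑ r ∈ Finset.univ.erase (g k), P r (τ r)) =
        ∑ m ∈ Finset.range k, P (g m) (g (m + 1)) := by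
      rw [hsplitU, Finset.sum_union hdisj, h1, h2, add_zero]
    -- build the permutation of the minor
    set σ : Option (Fin n) ≃ Option (Fin n) :=
      ((finSuccEquiv' (g k)).symm.trans (τ.trans (finSuccEquiv' (g 0)))) with hσ
    have hσnone : σ none = none := by
      show finSuccEquiv' (g 0) (τ ((finSuccEquiv' (g k)).symm none)) = none
      rw [finSuccEquiv'_symm_none, hji, finSuccEquiv'_at]
    set π : Equiv.Perm (Fin n) := Equiv.removeNone σ with hπdef
    have hπ : ∀ a : Fin n, (g 0).succAbove (π a) = τ ((g k).succAbove a) := by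
      intro a
      have hne : ∃ y, σ (some a) = some y := by
        rcases h : σ (some a) with _ | y
        · exact absurd (σ.injective (h.trans hσnone.symm)) (by simp)
        · exact ⟨y, rfl⟩
      have h3 : some (π a) = σ (some a) := Equiv.removeNone_some σ hne
      have h4 : σ (some a) = finSuccEquiv' (g 0) (τ ((g k).succAbove a)) := by
        show finSuccEquiv' (g 0) (τ ((finSuccEquiv' (g k)).symm (some a))) = _
        rw [finSuccEquiv'_symm_some]
      rw [h4] at h3
      have h5 := congrArg (finSuccEquiv' (g 0)).symm h3
      rw [Equiv.symm_apply_apply, finSuccEquiv'_symm_some] at h5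
      exact h5
    have hfinal : (∑ m ∈ Finset.range k, P (g m) (g (m + 1))) =
        ∑ a : Fin n, mpMinor P (g k) (g 0) a (π a) := by
      rw [← htot, ← sum_succAbove_erase (fun r => P r (τ r)) (g k)]
      refine Finset.sum_congr rfl fun a _ => ?_
      show P ((g k).succAbove a) (τ ((g k).succAbove a)) =
        P ((g k).succAbove a) ((g 0).succAbove (π a))
      rw [hπ a]
    rw [hfinal]
    exact Finset.le_sup (f := fun π : Equiv.Perm (Fin n) =>
      ∑ a, mpMinor P (g k) (g 0) a (π a)) (Finset.mem_univ π)

private lemma perm_bound (P : Matrix (Fin (n + 1)) (Fin (n + 1)) RMax)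
    (hdiag : ∀ i, P i i = (0 : RMax))
    (hcirc : ∀ D : MultiCircuit (Fin (n + 1)), IsCircuit D → InGraph P D → mcWeight P D ≤ 0)
    (τ : Equiv.Perm (Fin (n + 1))) (i j : Fin (n + 1)) (hτ : τ j = i) :
    (∑ r ∈ Finset.univ.erase j, P r (τ r)) ≤ mpStar P i j := by
  classical
  have hsc : ∃ t : ℕ, (τ ^ t) i = j := by
    have h1 : τ.SameCycle i j := by
      have h2 : τ.SameCycle j (τ j) :=
        Equiv.Perm.sameCycle_apply_right.2 (Equiv.Perm.SameCycle.refl τ j)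
      rw [hτ] at h2
      exact h2.symm
    obtain ⟨t, -, ht⟩ := h1.exists_pow_eq'
    exact ⟨t, ht⟩
  set c := Nat.find hsc with hcdef
  have hcj : (τ ^ c) i = j := Nat.find_spec hsc
  have hmin : ∀ t, t < c → (τ ^ t) i ≠ j := fun t ht => Nat.find_min hsc ht
  have hinj : ∀ s t, s ≤ c → t ≤ c → (τ ^ s) i = (τ ^ t) i → s = t := by
    have key : ∀ s t, s < t → t ≤ c → (τ ^ s) i ≠ (τ ^ t) i := by
      intro s t hst htc heq
      have h2 : (τ ^ (c - t)) ((τ ^ t) i) = j := by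
        rw [← Equiv.Perm.mul_apply, ← pow_add, Nat.sub_add_cancel htc]
        exact hcj
      rw [← heq, ← Equiv.Perm.mul_apply, ← pow_add] at h2
      exact hmin (c - t + s) (by omega) h2
    intro s t hs ht heq
    by_contra hne
    rcases Nat.lt_or_ge s t with h | h
    · exact key s t h ht heq
    · exact key t s (by omega) hs heq.symm
  have hcn : c ≤ n := by
    have hinjf : Function.Injective (fun t : Fin (c + 1) => (τ ^ (t : ℕ)) i) := by
      intro s t h
      exact Fin.ext (hinj s t (by omega) (by omega) h)
    have := Fintype.card_le_of_injective _ hinjf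
    simpa using this
  set W : Finset (Fin (n + 1)) := (Finset.range (c + 1)).image (fun t => (τ ^ t) i) with hW
  have hjW : j ∈ W := Finset.mem_image.2 ⟨c, Finset.mem_range.2 (by omega), hcj⟩
  have hWinv : ∀ x ∈ Finset.univ \ W, τ x ∈ Finset.univ \ W := by
    intro x hx
    rcases Finset.mem_sdiff.1 hx with ⟨-, hxW⟩
    refine Finset.mem_sdiff.2 ⟨Finset.mem_univ _, fun hmem => hxW ?_⟩
    obtain ⟨t, ht, hteq⟩ := Finset.mem_image.1 hmem
    have htc : t < c + 1 := Finset.mem_range.1 ht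
    cases t with
    | zero =>
      have h0 : i = τ x := by simpa using hteq
      have hxj : x = j := τ.injective (by rw [hτ, ← h0])
      exact hxj ▸ hjW
    | succ t' =>
      have h1 : τ ((τ ^ t') i) = τ x := by
        rw [← Equiv.Perm.mul_apply, ← pow_succ']
        exact hteq
      have h2 : x = (τ ^ t') i := (τ.injective h1).symm
      exact h2 ▸ Finset.mem_image.2 ⟨t', Finset.mem_range.2 (by omega), rfl⟩
  have hrest : (∑ r ∈ Finset.univ \ W, P r (τ r)) ≤ 0 :=
    perm_le_zero P hdiag hcirc τ _ hWinv
  have hWerase : W.erase j = (Finset.range c).image (fun t => (τ ^ t) i) := by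
    ext x
    constructor
    · intro hx
      rcases Finset.mem_erase.1 hx with ⟨hxj, hxW⟩
      obtain ⟨t, ht, rfl⟩ := Finset.mem_image.1 hxW
      have htc : t < c + 1 := Finset.mem_range.1 ht
      refine Finset.mem_image.2 ⟨t, Finset.mem_range.2 ?_, rfl⟩
      rcases Nat.lt_or_ge t c with h | h
      · exact h
      · have : t = c := by omega
        exact absurd (this ▸ hcj) hxj
    · intro hx
      obtain ⟨t, ht, rfl⟩ := Finset.mem_image.1 hx
      have htc : t < c := Finset.mem_range.1 ht
      exact Finset.mem_erase.2
        ⟨hmin t htc, Finset.mem_image.2 ⟨t, Finset.mem_range.2 (by omega), rfl⟩⟩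
  have hwalkeq : (∑ r ∈ W.erase j, P r (τ r)) =
      ∑ t ∈ Finset.range c, P ((τ ^ t) i) ((τ ^ (t + 1)) i) := by
    rw [hWerase, Finset.sum_image (fun s hs t ht h =>
      hinj s t (by have := Finset.mem_range.1 hs; omega)
        (by have := Finset.mem_range.1 ht; omega) h)]
    refine Finset.sum_congr rfl fun t _ => ?_
    rw [← Equiv.Perm.mul_apply, ← pow_succ']
  have hw2 : (∑ t ∈ Finset.range c, P ((τ ^ t) i) ((τ ^ (t + 1)) i)) ≤ mpPow P c i j := by
    have h := walk_le_pow P c (fun t => (τ ^ t) i)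
    simp only [pow_zero, Equiv.Perm.one_apply, hcj] at h
    exact h
  have hsplitU : Finset.univ.erase j = (W.erase j) ∪ (Finset.univ \ W) := by
    ext x
    constructor
    · intro hx
      have hxj := (Finset.mem_erase.1 hx).1
      by_cases hxW : x ∈ W
      · exact Finset.mem_union_left _ (Finset.mem_erase.2 ⟨hxj, hxW⟩)
      · exact Finset.mem_union_right _ (Finset.mem_sdiff.2 ⟨Finset.mem_univ _, hxW⟩)
    · intro hx
      rcases Finset.mem_union.1 hx with hx | hx
      · exact Finset.mem_erase.2 ⟨(Finset.mem_erase.1 hx).1, Finset.mem_univ _⟩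
      · refine Finset.mem_erase.2 ⟨fun h => ?_, Finset.mem_univ _⟩
        exact (Finset.mem_sdiff.1 hx).2 (h ▸ hjW)
  have hdisj : Disjoint (W.erase j) (Finset.univ \ W) :=
    Finset.disjoint_left.2 fun x hx hx' =>
      (Finset.mem_sdiff.1 hx').2 (Finset.mem_of_mem_erase hx)
  have hstar : mpPow P c i j ≤ mpStar P i j := by
    have hcmem : c ∈ Finset.range (Fintype.card (Fin (n + 1))) := by
      simp only [Fintype.card_fin, Finset.mem_range]
      omega
    exact Finset.le_sup (f := fun k => mpPow P k i j) hcmem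
  calc (∑ r ∈ Finset.univ.erase j, P r (τ r))
      = (∑ r ∈ W.erase j, P r (τ r)) + ∑ r ∈ Finset.univ \ W, P r (τ r) := by
        rw [hsplitU, Finset.sum_union hdisj]
    _ ≤ mpPow P c i j + 0 := add_le_add (hwalkeq ▸ hw2) hrest
    _ = mpPow P c i j := add_zero _
    _ ≤ mpStar P i j := hstar

end AuxProof

/-! ## Statement 12 -/
theorem adj_eq_star {n : ℕ} (P : Matrix (Fin (n + 1)) (Fin (n + 1)) RMax)
    (hdiag : ∀ i, P i i = (0 : RMax))
    (hcirc : ∀ D : MultiCircuit (Fin (n + 1)), IsCircuit D → InGraph P D →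
      mcWeight P D ≤ 0) :
    mpAdj P = mpStar P := by
  funext i j
  apply le_antisymm
  · show (Finset.univ.sup fun π : Equiv.Perm (Fin n) =>
      ∑ a, mpMinor P j i a (π a)) ≤ mpStar P i j
    refine Finset.sup_le fun π _ => ?_
    obtain ⟨τ, hτj, hτa⟩ : ∃ τ : Equiv.Perm (Fin (n + 1)), τ j = i ∧
        ∀ a : Fin n, τ (j.succAbove a) = i.succAbove (π a) := by
      refine ⟨(finSuccEquiv' j).trans ((Equiv.optionCongr π).trans (finSuccEquiv' i).symm),
        ?_, fun a => ?_⟩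
      · show (finSuccEquiv' i).symm (Equiv.optionCongr π (finSuccEquiv' j j)) = i
        rw [finSuccEquiv'_at]
        simp [finSuccEquiv'_symm_none]
      · show (finSuccEquiv' i).symm (Equiv.optionCongr π (finSuccEquiv' j (j.succAbove a))) = _
        rw [finSuccEquiv'_succAbove]
        simp [finSuccEquiv'_symm_some]
    have heq : (∑ a, mpMinor P j i a (π a)) = ∑ r ∈ Finset.univ.erase j, P r (τ r) := by
      rw [← sum_succAbove_erase (fun r => P r (τ r)) j]
      refine Finset.sum_congr rfl fun a _ => ?_
      show P (j.succAbove a) (i.succAbove (π a)) = P (j.succAbove a) (τ (j.succAbove a))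
      rw [hτa a]
    rw [heq]
    exact perm_bound P hdiag hcirc τ i j hτj
  · show (Finset.range (Fintype.card (Fin (n + 1)))).sup (fun k => mpPow P k i j) ≤ mpAdj P i j
    refine Finset.sup_le fun k _ => ?_
    rcases pow_eq_walk P k i j with h | ⟨g, hg0, hgk, hw⟩
    · rw [h]; exact bot_le
    · rw [hw]
      have h2 := walk_le_adj P hdiag hcirc k g
      rw [hg0, hgk] at h2
      exact h2
end

section
/- Suppose A ∈ ℝ_max^{n×n} satisfies assumption (★). Let λ ∈ ℝ, let C be a λ-maximal multi-circuit in G(A), and let C' be any multi-circuit in G(A). Then W(A,λ,C') ⊆ W(A,λ,C). In particular, if C' is also λ-maximal, then W(A,λ,C) = W(A,λ,C'). -/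
open Filter

section Proof14
open Finset

lemma rmax_nsmul_coe (k : ℕ) (r : ℝ) : k • (r : RMax) = ((k • r : ℝ) : RMax) := by
  induction k with
  | zero => simp
  | succ k ih => rw [succ_nsmul, ih, succ_nsmul, WithBot.coe_add]

lemma rmax_sum_ne_bot_iff {ι : Type*} (s : Finset ι) (f : ι → RMax) :
    (∑ i ∈ s, f i) ≠ ⊥ ↔ ∀ i ∈ s, f i ≠ ⊥ := by
  classical
  induction s using Finset.cons_induction with
  | empty => simp
  | cons a s ha ih => rw [Finset.sum_cons, WithBot.add_ne_bot, ih, Finset.forall_mem_cons]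

lemma rmax_add_lt_add {a b c d : RMax} (hab : a < b) (hcd : c ≤ d) (hb : b ≠ ⊥) (hd : d ≠ ⊥) :
    a + c < b + d := by
  obtain ⟨b', rfl⟩ := WithBot.ne_bot_iff_exists.mp hb
  obtain ⟨d', rfl⟩ := WithBot.ne_bot_iff_exists.mp hd
  induction a using WithBot.recBotCoe with
  | bot => rw [WithBot.bot_add, ← WithBot.coe_add]; exact WithBot.bot_lt_coe _
  | coe a' =>
    induction c using WithBot.recBotCoe with
    | bot => rw [WithBot.add_bot, ← WithBot.coe_add]; exact WithBot.bot_lt_coe _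
    | coe c' =>
      rw [← WithBot.coe_add, ← WithBot.coe_add, WithBot.coe_lt_coe]
      exact add_lt_add_of_lt_of_le (WithBot.coe_lt_coe.mp hab) (WithBot.coe_le_coe.mp hcd)

variable {n : ℕ}

noncomputable def wtF (A : Matrix (Fin n) (Fin n) RMax) (l : ℝ) (D : MultiCircuit (Fin n)) (i : Fin n) : RMax :=
  if i ∈ D.verts then A i (D.perm i) else (l : RMax)

noncomputable def mrow (A : Matrix (Fin n) (Fin n) RMax) (l : ℝ) (x : Vec (Fin n)) (i : Fin n) : RMax :=
  max (Finset.univ.sup fun j => A i j + x j) ((l : RMax) + x i)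

lemma valat_eq (A : Matrix (Fin n) (Fin n) RMax) (l : ℝ) (D : MultiCircuit (Fin n)) :
    ValAt A D (l : RMax) = ∑ i, wtF A l D i := by
  classical
  have h1 : ∑ i, wtF A l D i
      = ∑ i ∈ D.verts, A i (D.perm i) + ∑ i ∈ D.vertsᶜ, (l : RMax) := by
    rw [← Finset.sum_add_sum_compl D.verts]
    congr 1
    · exact Finset.sum_congr rfl (fun i hi => if_pos hi)
    · exact Finset.sum_congr rfl (fun i hi => if_neg (by simpa using hi))
  rw [ValAt, mcWeight, h1]
  congr 1
  rw [Finset.sum_const, Finset.card_compl, Fintype.card_fin]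

lemma maximal_ne_bot {A : Matrix (Fin n) (Fin n) RMax} {l : ℝ} {C : MultiCircuit (Fin n)}
    (hmax : MaximalAt A C l) : ∀ i ∈ C.verts, A i (C.perm i) ≠ ⊥ := by
  have h0 := hmax ⟨∅, 1, fun _ _ => rfl⟩
  have h1 : ValAt A (⟨∅, 1, fun _ _ => rfl⟩ : MultiCircuit (Fin n)) (l : RMax)
      = ((Fintype.card (Fin n) • l : ℝ) : RMax) := by
    rw [ValAt, mcWeight]
    simp [rmax_nsmul_coe]
  rw [h1] at h0
  have h2 : ValAt A C (l : RMax) ≠ ⊥ := by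
    intro h
    rw [h, le_bot_iff] at h0
    exact WithBot.coe_ne_bot h0
  rw [ValAt] at h2
  have h3 : mcWeight A C ≠ ⊥ := fun h => h2 (by rw [h, WithBot.bot_add])
  rw [mcWeight] at h3
  exact (rmax_sum_ne_bot_iff _ _).mp h3

lemma wtF_ne_bot {A : Matrix (Fin n) (Fin n) RMax} {l : ℝ} {D : MultiCircuit (Fin n)}
    (hg : ∀ i ∈ D.verts, A i (D.perm i) ≠ ⊥) (i : Fin n) : wtF A l D i ≠ ⊥ := by
  rw [wtF]
  split
  · exact hg i ‹_›
  · exact WithBot.coe_ne_bot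

lemma termA_le_mrow (A : Matrix (Fin n) (Fin n) RMax) (l : ℝ) (x : Vec (Fin n)) (i j : Fin n) :
    A i j + x j ≤ mrow A l x i := by
  rw [mrow]
  exact le_trans (Finset.le_sup (f := fun j => A i j + x j) (Finset.mem_univ j)) (le_max_left _ _)

lemma termL_le_mrow (A : Matrix (Fin n) (Fin n) RMax) (l : ℝ) (x : Vec (Fin n)) (i : Fin n) :
    (l : RMax) + x i ≤ mrow A l x i := by
  rw [mrow]; exact le_max_right _ _

lemma cterm_le_mrow (A : Matrix (Fin n) (Fin n) RMax) (l : ℝ) (x : Vec (Fin n))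
    (D : MultiCircuit (Fin n)) (i : Fin n) :
    wtF A l D i + x (D.perm i) ≤ mrow A l x i := by
  by_cases h : i ∈ D.verts
  · rw [wtF, if_pos h]; exact termA_le_mrow A l x i (D.perm i)
  · rw [wtF, if_neg h, D.fixes i h]; exact termL_le_mrow A l x i

lemma rhs_row (A : Matrix (Fin n) (Fin n) RMax) (l : ℝ) (x : Vec (Fin n))
    (D : MultiCircuit (Fin n)) (i : Fin n) :
    mpMulVec (mpAddM (matC A D) (smulM (l : RMax) (eNotC D))) x i
      = wtF A l D i + x (D.perm i) := by
  classical
  apply le_antisymm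
  · apply Finset.sup_le
    intro j _
    show max (matC A D i j) (smulM (l : RMax) (eNotC D) i j) + x j ≤ _
    rw [← max_add_add_right]
    apply max_le
    · simp only [matC]
      by_cases h : i ∈ D.verts ∧ j = D.perm i
      · obtain ⟨h1, h2⟩ := h
        subst h2
        have hc : i ∈ D.verts ∧ D.perm i = D.perm i := ⟨h1, rfl⟩
        rw [if_pos hc, wtF, if_pos h1]
      · rw [if_neg h, WithBot.bot_add]; exact bot_le
    · simp only [smulM, eNotC]
      by_cases h : i = j ∧ i ∉ D.verts
      · obtain ⟨h1, h2⟩ := h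
        subst h1
        have hc : i = i ∧ i ∉ D.verts := ⟨rfl, h2⟩
        rw [if_pos hc, add_zero, wtF, if_neg h2, D.fixes i h2]
      · rw [if_neg h, WithBot.add_bot, WithBot.bot_add]; exact bot_le
  · have hentry : wtF A l D i + x (D.perm i)
        = max (matC A D i (D.perm i)) (smulM (l : RMax) (eNotC D) i (D.perm i)) + x (D.perm i) := by
      by_cases h : i ∈ D.verts
      · rw [wtF, if_pos h]
        congr 1
        simp [mpAddM, matC, smulM, eNotC, h]
      · rw [wtF, if_neg h]
        congr 1
        simp [mpAddM, matC, smulM, eNotC, h, D.fixes i h]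
    rw [hentry]
    show mpAddM (matC A D) (smulM (l : RMax) (eNotC D)) i (D.perm i) + x (D.perm i) ≤ _
    simp only [mpMulVec]
    exact Finset.le_sup
      (f := fun j => mpAddM (matC A D) (smulM (l : RMax) (eNotC D)) i j + x j)
      (Finset.mem_univ (D.perm i))

lemma termA_le_lhs (A : Matrix (Fin n) (Fin n) RMax) (l : ℝ) (x : Vec (Fin n))
    (D : MultiCircuit (Fin n)) (i j : Fin n) (hj : i ∈ D.verts → j ≠ D.perm i) :
    A i j + x j ≤ mpMulVec (mpAddM (matNotC A D) (smulM (l : RMax) (eC D))) x i := by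
  simp only [mpMulVec]
  refine le_trans ?_ (Finset.le_sup (Finset.mem_univ j))
  apply add_le_add_left
  refine le_trans ?_ (le_max_left _ _)
  simp only [matNotC]
  rw [if_neg (fun h => hj h.1 h.2)]

lemma termL_le_lhs (A : Matrix (Fin n) (Fin n) RMax) (l : ℝ) (x : Vec (Fin n))
    (D : MultiCircuit (Fin n)) (i : Fin n) (h : i ∈ D.verts) :
    (l : RMax) + x i ≤ mpMulVec (mpAddM (matNotC A D) (smulM (l : RMax) (eC D))) x i := by
  simp only [mpMulVec]
  refine le_trans ?_ (Finset.le_sup (Finset.mem_univ i))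
  apply add_le_add_left
  refine le_trans ?_ (le_max_right _ _)
  simp [smulM, eC, h]

lemma lhs_le_mrow (A : Matrix (Fin n) (Fin n) RMax) (l : ℝ) (x : Vec (Fin n))
    (D : MultiCircuit (Fin n)) (i : Fin n) :
    mpMulVec (mpAddM (matNotC A D) (smulM (l : RMax) (eC D))) x i ≤ mrow A l x i := by
  simp only [mpMulVec]
  apply Finset.sup_le
  intro j _
  show max (matNotC A D i j) (smulM (l : RMax) (eC D) i j) + x j ≤ _
  rw [← max_add_add_right]
  apply max_le
  · refine le_trans (add_le_add_left ?_ _) (termA_le_mrow A l x i j)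
    simp only [matNotC]
    split
    · exact bot_le
    · exact le_rfl
  · simp only [smulM, eC]
    by_cases h : i = j ∧ i ∈ D.verts
    · obtain ⟨h1, h2⟩ := h
      subst h1
      have hc : i = i ∧ i ∈ D.verts := ⟨rfl, h2⟩
      rw [if_pos hc, add_zero]
      exact termL_le_mrow A l x i
    · rw [if_neg h, WithBot.add_bot, WithBot.bot_add]; exact bot_le

lemma max_lhs_rhs (A : Matrix (Fin n) (Fin n) RMax) (l : ℝ) (x : Vec (Fin n))
    (D : MultiCircuit (Fin n)) (i : Fin n) :
    max (mpMulVec (mpAddM (matNotC A D) (smulM (l : RMax) (eC D))) x i)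
        (mpMulVec (mpAddM (matC A D) (smulM (l : RMax) (eNotC D))) x i) = mrow A l x i := by
  classical
  apply le_antisymm
  · apply max_le (lhs_le_mrow A l x D i)
    rw [rhs_row]
    exact cterm_le_mrow A l x D i
  · rw [mrow]
    apply max_le
    · apply Finset.sup_le
      intro j _
      by_cases h : i ∈ D.verts ∧ j = D.perm i
      · refine le_trans ?_ (le_max_right _ _)
        rw [rhs_row]
        obtain ⟨h1, h2⟩ := h
        subst h2
        rw [wtF, if_pos h1]
      · exact le_trans (termA_le_lhs A l x D i j (fun hv hj => h ⟨hv, hj⟩)) (le_max_left _ _)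
    · by_cases h : i ∈ D.verts
      · exact le_trans (termL_le_lhs A l x D i h) (le_max_left _ _)
      · refine le_trans ?_ (le_max_right _ _)
        rw [rhs_row, wtF, if_neg h, D.fixes i h]

lemma lhs_attain (A : Matrix (Fin n) (Fin n) RMax) (l : ℝ) (x : Vec (Fin n))
    (D : MultiCircuit (Fin n)) (i : Fin n)
    (heq : mpMulVec (mpAddM (matNotC A D) (smulM (l : RMax) (eC D))) x i = mrow A l x i)
    (hne : mrow A l x i ≠ ⊥) :
    (∃ j, (i ∈ D.verts → j ≠ D.perm i) ∧ A i j + x j = mrow A l x i) ∨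
      (i ∈ D.verts ∧ (l : RMax) + x i = mrow A l x i) := by
  classical
  have heq' : Finset.univ.sup
      (fun j => mpAddM (matNotC A D) (smulM (l : RMax) (eC D)) i j + x j) = mrow A l x i := by
    rw [← heq]; simp only [mpMulVec]
  obtain ⟨j₀, _, hj₀⟩ := Finset.exists_mem_eq_sup Finset.univ ⟨i, Finset.mem_univ i⟩
    (fun j => mpAddM (matNotC A D) (smulM (l : RMax) (eC D)) i j + x j)
  have hval : max (matNotC A D i j₀) (smulM (l : RMax) (eC D) i j₀) + x j₀ = mrow A l x i := by
    rw [← heq', hj₀]; rfl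
  rw [← max_add_add_right] at hval
  rcases max_eq_iff.mp hval with ⟨h1, _⟩ | ⟨h1, _⟩
  · left
    by_cases hc : i ∈ D.verts ∧ j₀ = D.perm i
    · exfalso
      rw [matNotC, if_pos hc, WithBot.bot_add] at h1
      exact hne h1.symm
    · exact ⟨j₀, fun hv hj => hc ⟨hv, hj⟩, by rwa [matNotC, if_neg hc] at h1⟩
  · right
    simp only [smulM, eC] at h1
    by_cases hc : i = j₀ ∧ i ∈ D.verts
    · obtain ⟨h2, h3⟩ := hc
      subst h2
      have hc : i = i ∧ i ∈ D.verts := ⟨rfl, h3⟩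
      rw [if_pos hc, add_zero] at h1
      exact ⟨h3, h1⟩
    · exfalso
      rw [if_neg hc, WithBot.add_bot, WithBot.bot_add] at h1
      exact hne h1.symm

end Proof14
section Proof14b
open Finset

variable {n : ℕ}

lemma cterm_eq (A : Matrix (Fin n) (Fin n) RMax) (l : ℝ) (x : Vec (Fin n))
    (C C' : MultiCircuit (Fin n)) (hmax : MaximalAt A C l)
    (hC' : ∀ i, wtF A l C' i + x (C'.perm i) = mrow A l x i) :
    ∀ i, wtF A l C i + x (C.perm i) = mrow A l x i := by
  classical
  have hgraph : ∀ i ∈ C.verts, A i (C.perm i) ≠ ⊥ := maximal_ne_bot hmax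
  set σ : Equiv.Perm (Fin n) := C.perm with hσdef
  set σ' : Equiv.Perm (Fin n) := C'.perm with hσ'def
  set m : Fin n → RMax := mrow A l x with hmdef
  set R : Finset (Fin n) := Finset.univ.filter (fun i => m i ≠ ⊥) with hRdef
  set T : Finset (Fin n) := Finset.univ.filter (fun i => x i ≠ ⊥) with hTdef
  have hmemR : ∀ i, i ∈ R ↔ m i ≠ ⊥ := by intro i; simp [hRdef]
  have hmemT : ∀ i, i ∈ T ↔ x i ≠ ⊥ := by intro i; simp [hTdef]
  have hTR : T ⊆ R := by
    intro i hi
    rw [hmemT] at hi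
    rw [hmemR]
    intro h2
    have hle := termL_le_mrow A l x i
    rw [← hmdef, h2, le_bot_iff] at hle
    exact (WithBot.add_ne_bot.mpr ⟨WithBot.coe_ne_bot, hi⟩) hle
  have hσ'T : ∀ i ∈ R, σ' i ∈ T := by
    intro i hi
    rw [hmemR] at hi
    rw [hmemT]
    have h1 : wtF A l C' i + x (σ' i) ≠ ⊥ := by rw [hC' i]; exact hi
    exact (WithBot.add_ne_bot.mp h1).2
  have hRT : T = R := by
    apply Finset.eq_of_subset_of_card_le hTR
    calc R.card = (R.image σ').card := (Finset.card_image_of_injective _ σ'.injective).symm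
      _ ≤ T.card := Finset.card_le_card (by
          intro j hj
          obtain ⟨i, hi, rfl⟩ := Finset.mem_image.mp hj
          exact hσ'T i hi)
  have hσR : ∀ k, σ k ∈ R → k ∈ R := by
    intro k hk
    by_contra hkR
    by_cases hkv : k ∈ C.verts
    · have hx1 : x (σ k) ≠ ⊥ := (hmemT _).mp (hRT ▸ hk)
      have hne : A k (σ k) + x (σ k) ≠ ⊥ := WithBot.add_ne_bot.mpr ⟨hgraph k hkv, hx1⟩
      have hle : A k (σ k) + x (σ k) ≤ m k := termA_le_mrow A l x k (σ k)
      have hmb : m k = ⊥ := not_not.mp (fun h => hkR ((hmemR k).mpr h))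
      rw [hmb, le_bot_iff] at hle
      exact hne hle
    · exact hkR (C.fixes k hkv ▸ hk)
  have hFempty : R.filter (fun i => wtF A l C i + x (σ i) ≠ m i) = ∅ := by
    by_contra hFne
    obtain ⟨i₀, hi₀F⟩ := Finset.nonempty_iff_ne_empty.mpr hFne
    set F : Finset (Fin n) := R.filter (fun i => wtF A l C i + x (σ i) ≠ m i) with hFdef
    set θ : Equiv.Perm (Fin n) := σ⁻¹ * σ' with hθdef
    have hθap : ∀ i, σ (θ i) = σ' i := by
      intro i
      rw [hθdef]
      simp [Equiv.Perm.mul_apply]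
    have hθR : ∀ i ∈ R, θ i ∈ R := by
      intro i hi
      apply hσR
      rw [hθap]
      exact hTR (hσ'T i hi)
    have hpowR : ∀ k : ℕ, ∀ i ∈ R, (θ ^ k) i ∈ R := by
      intro k
      induction k with
      | zero => intro i hi; simpa using hi
      | succ k ih =>
        intro i hi
        have : (θ ^ (k + 1)) i = (θ ^ k) (θ i) := by rw [pow_succ]; rfl
        rw [this]
        exact ih _ (hθR i hi)
    set S : Finset (Fin n) := Finset.univ.filter (fun i => ∃ j ∈ F, ∃ k : ℕ, (θ ^ k) j = i)
      with hSdef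
    have hmemS : ∀ i, i ∈ S ↔ ∃ j ∈ F, ∃ k : ℕ, (θ ^ k) j = i := by intro i; simp [hSdef]
    have hFS : F ⊆ S := fun j hj => (hmemS j).mpr ⟨j, hj, 0, rfl⟩
    have hSR : S ⊆ R := by
      intro i hi
      obtain ⟨j, hjF, k, rfl⟩ := (hmemS i).mp hi
      exact hpowR k j (Finset.mem_of_mem_filter j hjF)
    have hθS : ∀ i ∈ S, θ i ∈ S := by
      intro i hi
      obtain ⟨j, hjF, k, rfl⟩ := (hmemS i).mp hi
      refine (hmemS _).mpr ⟨j, hjF, k + 1, ?_⟩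
      rw [pow_succ']
      rfl
    have himg : S.image θ = S := by
      apply Finset.eq_of_subset_of_card_le
      · intro j hj
        obtain ⟨i, hi, rfl⟩ := Finset.mem_image.mp hj
        exact hθS i hi
      · exact le_of_eq (Finset.card_image_of_injective S θ.injective).symm
    have hθinvS : ∀ i ∈ S, θ⁻¹ i ∈ S := by
      intro i hi
      obtain ⟨s, hs, hsi⟩ := Finset.mem_image.mp (himg ▸ hi)
      rw [← hsi]
      simpa [Equiv.Perm.inv_def, Equiv.symm_apply_apply] using hs
    set τ : Equiv.Perm (Fin n) :=
      { toFun := fun i => if i ∈ S then θ i else i,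
        invFun := fun i => if i ∈ S then θ⁻¹ i else i,
        left_inv := by
          intro i
          by_cases hi : i ∈ S
          · simp only [if_pos hi, if_pos (hθS i hi), Equiv.Perm.inv_def, Equiv.symm_apply_apply]
          · simp only [if_neg hi]
        right_inv := by
          intro i
          by_cases hi : i ∈ S
          · simp only [if_pos hi, if_pos (hθinvS i hi)]; exact θ.apply_symm_apply i
          · simp only [if_neg hi] } with hτdef
    set ρ : Equiv.Perm (Fin n) := σ * τ with hρdef
    have hρS : ∀ i ∈ S, ρ i = σ' i := by
      intro i hi
      rw [hρdef, Equiv.Perm.mul_apply, hτdef]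
      show σ (if i ∈ S then θ i else i) = σ' i
      rw [if_pos hi, hθap]
    have hρnS : ∀ i ∉ S, ρ i = σ i := by
      intro i hi
      rw [hρdef, Equiv.Perm.mul_apply, hτdef]
      show σ (if i ∈ S then θ i else i) = σ i
      rw [if_neg hi]
    set V2 : Finset (Fin n) := (S ∩ C'.verts) ∪ (C.verts \ S) with hV2def
    have hmemV2 : ∀ i, i ∈ V2 ↔ (if i ∈ S then i ∈ C'.verts else i ∈ C.verts) := by
      intro i
      by_cases hi : i ∈ S <;> simp [hV2def, hi]
    have hfix : ∀ i, i ∉ V2 → ρ i = i := by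
      intro i hi
      rw [hmemV2] at hi
      by_cases his : i ∈ S
      · rw [if_pos his] at hi
        rw [hρS i his]
        exact C'.fixes i hi
      · rw [if_neg his] at hi
        rw [hρnS i his]
        exact C.fixes i hi
    set C₂ : MultiCircuit (Fin n) := ⟨V2, ρ, hfix⟩ with hC₂def
    have hC2v : C₂.verts = V2 := rfl
    have hC2p : C₂.perm = ρ := rfl
    have hwt2 : ∀ i, wtF A l C₂ i = if i ∈ S then wtF A l C' i else wtF A l C i := by
      intro i
      by_cases his : i ∈ S
      · rw [if_pos his]
        have hiff : i ∈ V2 ↔ i ∈ C'.verts := by rw [hmemV2, if_pos his]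
        rw [wtF, wtF, hC2v, hC2p]
        by_cases hv : i ∈ C'.verts
        · rw [if_pos (hiff.mpr hv), if_pos hv, hρS i his]
        · rw [if_neg (fun h => hv (hiff.mp h)), if_neg hv]
      · rw [if_neg his]
        have hiff : i ∈ V2 ↔ i ∈ C.verts := by rw [hmemV2, if_neg his]
        rw [wtF, wtF, hC2v, hC2p]
        by_cases hv : i ∈ C.verts
        · rw [if_pos (hiff.mpr hv), if_pos hv, hρnS i his]
        · rw [if_neg (fun h => hv (hiff.mp h)), if_neg hv]
    -- sums over S
    have hmS : ∀ i ∈ S, m i ≠ ⊥ := fun i hi => (hmemR _).mp (hSR hi)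
    have hi₀S : i₀ ∈ S := hFS hi₀F
    have hstrict : wtF A l C i₀ + x (σ i₀) < m i₀ :=
      lt_of_le_of_ne (cterm_le_mrow A l x C i₀) ((Finset.mem_filter.mp hi₀F).2)
    have hA1 : ∑ i ∈ S, (wtF A l C i + x (σ i)) < ∑ i ∈ S, m i := by
      rw [← Finset.add_sum_erase S _ hi₀S, ← Finset.add_sum_erase S m hi₀S]
      refine rmax_add_lt_add hstrict
        (Finset.sum_le_sum (fun i _ => cterm_le_mrow A l x C i))
        (hmS i₀ hi₀S)
        ((rmax_sum_ne_bot_iff _ _).mpr (fun i hi => hmS i (Finset.mem_of_mem_erase hi)))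
    have hB : ∑ i ∈ S, m i = ∑ i ∈ S, wtF A l C' i + ∑ i ∈ S, x (σ' i) := by
      rw [← Finset.sum_add_distrib]
      exact Finset.sum_congr rfl (fun i _ => (hC' i).symm)
    have hCsum : ∑ i ∈ S, x (σ i) = ∑ i ∈ S, x (σ' i) := by
      have h1 : ∑ i ∈ S, x (σ' i) = ∑ i ∈ S, x (σ (θ i)) :=
        Finset.sum_congr rfl (fun i _ => by rw [hθap])
      have h2 : ∑ j ∈ S.image θ, x (σ j) = ∑ i ∈ S, x (σ (θ i)) := by
        refine Finset.sum_image (f := fun j => x (σ j)) ?_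
        exact fun a _ b _ h => θ.injective h
      rw [h1, ← h2, himg]
    have hclt : ∑ i ∈ S, wtF A l C i + ∑ i ∈ S, x (σ' i)
        < ∑ i ∈ S, wtF A l C' i + ∑ i ∈ S, x (σ' i) := by
      calc ∑ i ∈ S, wtF A l C i + ∑ i ∈ S, x (σ' i)
          = ∑ i ∈ S, (wtF A l C i + x (σ i)) := by rw [← hCsum, Finset.sum_add_distrib]
        _ < ∑ i ∈ S, m i := hA1
        _ = _ := hB
    have hPlt : ∑ i ∈ S, wtF A l C i < ∑ i ∈ S, wtF A l C' i := by
      by_contra hle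
      exact absurd (add_le_add_left (not_lt.mp hle) (∑ i ∈ S, x (σ' i))) (not_le.mpr hclt)
    have hwtC'ne : ∀ i ∈ S, wtF A l C' i ≠ ⊥ := by
      intro i hi
      have h1 : wtF A l C' i + x (σ' i) ≠ ⊥ := by rw [hC' i]; exact hmS i hi
      exact (WithBot.add_ne_bot.mp h1).1
    have hwtCne : ∀ i, wtF A l C i ≠ ⊥ := wtF_ne_bot hgraph
    have hval : ValAt A C₂ (l : RMax) ≤ ValAt A C (l : RMax) := hmax C₂
    rw [valat_eq, valat_eq] at hval
    have hsplit2 : ∑ i, wtF A l C₂ i = ∑ i ∈ S, wtF A l C' i + ∑ i ∈ Sᶜ, wtF A l C i := by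
      rw [← Finset.sum_add_sum_compl S]
      congr 1
      · exact Finset.sum_congr rfl (fun i hi => by rw [hwt2, if_pos hi])
      · exact Finset.sum_congr rfl (fun i hi => by rw [hwt2, if_neg (by simpa using hi)])
    have hsplit1 : ∑ i, wtF A l C i = ∑ i ∈ S, wtF A l C i + ∑ i ∈ Sᶜ, wtF A l C i :=
      (Finset.sum_add_sum_compl S _).symm
    rw [hsplit2, hsplit1] at hval
    refine absurd hval (not_le.mpr (rmax_add_lt_add hPlt le_rfl ?_ ?_))
    · exact (rmax_sum_ne_bot_iff _ _).mpr hwtC'ne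
    · exact (rmax_sum_ne_bot_iff _ _).mpr (fun i _ => hwtCne i)
  intro i
  by_cases hiR : i ∈ R
  · have hnF : i ∉ R.filter (fun i => wtF A l C i + x (σ i) ≠ m i) := by
      rw [hFempty]
      exact Finset.notMem_empty i
    rw [Finset.mem_filter] at hnF
    push_neg at hnF
    exact hnF hiR
  · have hmb : m i = ⊥ := not_not.mp (fun h => hiR ((hmemR i).mpr h))
    have hle := cterm_le_mrow A l x C i
    rw [← hmdef, hmb, le_bot_iff] at hle
    rw [hle]
    exact hmb.symm

lemma key_subset (A : Matrix (Fin n) (Fin n) RMax) (l : ℝ) (C C' : MultiCircuit (Fin n))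
    (hC : IsLamMax A C (l : RMax)) : WAC A (l : RMax) C' ⊆ WAC A (l : RMax) C := by
  intro x hx
  have hmax : MaximalAt A C l := hC.1 l rfl
  have hx' : mpMulVec (mpAddM (matNotC A C') (smulM (l : RMax) (eC C'))) x
      = mpMulVec (mpAddM (matC A C') (smulM (l : RMax) (eNotC C'))) x := hx
  have hrow : ∀ i, mpMulVec (mpAddM (matNotC A C') (smulM (l : RMax) (eC C'))) x i
      = mpMulVec (mpAddM (matC A C') (smulM (l : RMax) (eNotC C'))) x i :=
    fun i => congrFun hx' i
  have hCt' : ∀ i, wtF A l C' i + x (C'.perm i) = mrow A l x i := by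
    intro i
    rw [← rhs_row, ← max_lhs_rhs A l x C' i, hrow i, max_self]
  have hL' : ∀ i, mpMulVec (mpAddM (matNotC A C') (smulM (l : RMax) (eC C'))) x i
      = mrow A l x i := by
    intro i
    rw [← max_lhs_rhs A l x C' i, hrow i, max_self]
  have hct : ∀ i, wtF A l C i + x (C.perm i) = mrow A l x i := cterm_eq A l x C C' hmax hCt'
  show mpMulVec (mpAddM (matNotC A C) (smulM (l : RMax) (eC C))) x
      = mpMulVec (mpAddM (matC A C) (smulM (l : RMax) (eNotC C))) x
  funext i
  rw [rhs_row, hct i]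
  apply le_antisymm (lhs_le_mrow A l x C i)
  by_cases hb : mrow A l x i = ⊥
  · rw [hb]; exact bot_le
  · rcases lhs_attain A l x C' i (hL' i) hb with ⟨j, hjc, hjv⟩ | ⟨hiC', hlv⟩
    · by_cases hiC : i ∈ C.verts
      · by_cases hj2 : j = C.perm i
        · by_cases hiC'2 : i ∈ C'.verts
          · have hne : C'.perm i ≠ C.perm i := fun h => (hjc hiC'2) (hj2.trans h.symm)
            have hv2 : A i (C'.perm i) + x (C'.perm i) = mrow A l x i := by
              have := hCt' i
              rwa [wtF, if_pos hiC'2] at this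
            rw [← hv2]
            exact termA_le_lhs A l x C i (C'.perm i) (fun _ => hne)
          · have hv2 : (l : RMax) + x i = mrow A l x i := by
              have := hCt' i
              rwa [wtF, if_neg hiC'2, C'.fixes i hiC'2] at this
            rw [← hv2]
            exact termL_le_lhs A l x C i hiC
        · rw [← hjv]
          exact termA_le_lhs A l x C i j (fun _ => hj2)
      · rw [← hjv]
        exact termA_le_lhs A l x C i j (fun h => absurd h hiC)
    · by_cases hiC : i ∈ C.verts
      · rw [← hlv]
        exact termL_le_lhs A l x C i hiC
      · have hv2 : A i (C'.perm i) + x (C'.perm i) = mrow A l x i := by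
          have := hCt' i
          rwa [wtF, if_pos hiC'] at this
        rw [← hv2]
        exact termA_le_lhs A l x C i (C'.perm i) (fun h => absurd h hiC)

end Proof14b
/-! ## Statement 14 -/
theorem WAC_subset_of_maximal {n : ℕ} (A : Matrix (Fin n) (Fin n) RMax)
    (hA : StarAssumption A) (l : ℝ) (C C' : MultiCircuit (Fin n))
    (hC : IsLamMax A C (l : RMax)) :
    WAC A (l : RMax) C' ⊆ WAC A (l : RMax) C ∧
      (IsLamMax A C' (l : RMax) → WAC A (l : RMax) C = WAC A (l : RMax) C') := by
  refine ⟨key_subset A l C C' hC, fun hC' => ?_⟩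
  exact Set.Subset.antisymm (key_subset A l C' C hC') (key_subset A l C C' hC)
end

section
/- For every matrix A ∈ ℝ_max^{n×n}, the maximum of the average weights of all elementary circuits in G(A) (taken to be ε if G(A) contains no circuit) is the maximum eigenvalue of A: it is an eigenvalue of A, and every eigenvalue of A is less than or equal to it. -/
open Filter

/-! ## Auxiliary machinery -/

section AuxMachinery

set_option linter.unusedSectionVars false

open List

variable {ι : Type} [Fintype ι] [DecidableEq ι]

/-- Weight of a walk, given as the list of visited vertices. -/
def wtl (B : Matrix ι ι RMax) : List ι → RMax
  | [] => 0
  | [_] => 0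
  | a :: b :: l => B a b + wtl B (b :: l)

lemma wtl_nil (B : Matrix ι ι RMax) : wtl B [] = 0 := rfl

lemma wtl_single (B : Matrix ι ι RMax) (a : ι) : wtl B [a] = 0 := rfl

lemma wtl_cons_cons (B : Matrix ι ι RMax) (a b : ι) (l : List ι) :
    wtl B (a :: b :: l) = B a b + wtl B (b :: l) := rfl

lemma wtl_split (B : Matrix ι ι RMax) (v : ι) (l2 : List ι) :
    ∀ l1 : List ι, wtl B (l1 ++ v :: l2) = wtl B (l1 ++ [v]) + wtl B (v :: l2)
  | [] => by simp [wtl_single]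
  | [a] => by simp [wtl_cons_cons, wtl_single]
  | a :: b :: l1 => by
      have h := wtl_split B v l2 (b :: l1)
      simp only [cons_append] at h ⊢
      rw [wtl_cons_cons, wtl_cons_cons, h, add_assoc]

lemma wtl_eq_sum (B : Matrix ι ι RMax) (d : ι) :
    ∀ (l : List ι) (a : ι),
      wtl B (a :: l) = ∑ t ∈ Finset.range l.length, B ((a :: l).getD t d) (l.getD t d)
  | [], a => by simp [wtl_single]
  | b :: l, a => by
      rw [wtl_cons_cons, wtl_eq_sum B d l b, length_cons, Finset.sum_range_succ']
      simp [List.getD_cons_succ, List.getD_cons_zero, add_comm]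

lemma exists_dup_split {α : Type*} :
    ∀ {l : List α}, ¬ l.Nodup → ∃ (a : α) (l1 l2 l3 : List α),
      l = l1 ++ (a :: (l2 ++ (a :: l3)))
  | [], h => absurd List.nodup_nil h
  | b :: t, h => by
      by_cases hb : b ∈ t
      · obtain ⟨s, r, rfl⟩ := List.append_of_mem hb
        exact ⟨b, [], s, r, rfl⟩
      · have ht : ¬ t.Nodup := fun hn => h (List.nodup_cons.mpr ⟨hb, hn⟩)
        obtain ⟨a, l1, l2, l3, rfl⟩ := exists_dup_split ht
        exact ⟨a, b :: l1, l2, l3, rfl⟩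

/-- The multi-circuit determined by a nodup list. -/
def listMC (L : List ι) : MultiCircuit ι :=
  ⟨L.toFinset, L.formPerm, fun i h => List.formPerm_apply_of_notMem (by simpa using h)⟩

lemma formPerm_sameCycle {L : List ι} (hnd : L.Nodup) :
    ∀ x ∈ L, ∀ y ∈ L, L.formPerm.SameCycle x y := by
  intro x hx y hy
  rcases Nat.lt_or_ge L.length 2 with h2 | h2
  · have h1 : L.length = 1 := by
      have : 0 < L.length := List.length_pos_iff.mpr (List.ne_nil_of_mem hx)
      omega
    obtain ⟨a, rfl⟩ := List.length_eq_one_iff.mp h1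
    simp only [List.mem_singleton] at hx hy
    subst hx; subst hy
    exact Equiv.Perm.SameCycle.refl _ _
  · exact (List.isCycle_formPerm hnd h2).sameCycle
      ((List.formPerm_apply_mem_ne_self_iff _ hnd _ hx).mpr h2)
      ((List.formPerm_apply_mem_ne_self_iff _ hnd _ hy).mpr h2)

lemma listMC_isCircuit {L : List ι} (hnd : L.Nodup) (hne : L ≠ []) :
    IsCircuit (listMC L) := by
  constructor
  · obtain ⟨x, hx⟩ := List.exists_mem_of_ne_nil L hne
    exact ⟨x, List.mem_toFinset.mpr hx⟩
  · intro i hi j hj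
    exact formPerm_sameCycle hnd i (List.mem_toFinset.mp hi) j (List.mem_toFinset.mp hj)

lemma sum_toFinset_eq {L : List ι} (hnd : L.Nodup) (d : ι) (f : ι → RMax) :
    ∑ x ∈ L.toFinset, f x = ∑ t ∈ Finset.range L.length, f (L.getD t d) := by
  have himg : L.toFinset = (Finset.range L.length).image (fun t => L.getD t d) := by
    ext x
    simp only [Finset.mem_image, Finset.mem_range, List.mem_toFinset]
    constructor
    · intro h
      obtain ⟨i, hi, hx⟩ := List.mem_iff_getElem.mp h
      exact ⟨i, hi, by rw [List.getD_eq_getElem _ _ hi]; exact hx⟩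
    · rintro ⟨i, hi, rfl⟩
      rw [List.getD_eq_getElem _ _ hi]
      exact List.getElem_mem _
  rw [himg, Finset.sum_image]
  intro a ha b hb hab
  rw [Finset.mem_coe, Finset.mem_range] at ha hb
  beta_reduce at hab
  rw [List.getD_eq_getElem _ _ ha, List.getD_eq_getElem _ _ hb] at hab
  exact (List.Nodup.getElem_inj_iff hnd).mp hab

lemma mcWeight_listMC {L : List ι} (hnd : L.Nodup) (a : ι) (M : List ι) (hL : L = a :: M)
    (P : Matrix ι ι RMax) :
    mcWeight P (listMC L) = wtl P (L ++ [a]) := by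
  have hlen : L.length = M.length + 1 := by rw [hL]; simp
  have hwalk : L ++ [a] = a :: (M ++ [a]) := by rw [hL]; simp
  rw [hwalk, wtl_eq_sum P a]
  show ∑ x ∈ L.toFinset, P x (L.formPerm x) = _
  rw [sum_toFinset_eq hnd a]
  have hlen2 : (M ++ [a]).length = L.length := by simp [hlen]
  rw [hlen2]
  refine Finset.sum_congr rfl ?_
  intro t ht
  rw [Finset.mem_range] at ht
  have h1 : (a :: (M ++ [a])).getD t a = L.getD t a := by
    have : a :: (M ++ [a]) = L ++ [a] := hwalk.symm
    rw [this, List.getD_append _ _ _ _ ht]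
  rw [h1]
  congr 1
  -- L.formPerm (L.getD t a) = (M ++ [a]).getD t a
  rw [List.getD_eq_getElem _ _ ht, List.formPerm_apply_getElem _ hnd t ht,
    ← List.getD_eq_getElem L a (Nat.mod_lt _ (by omega))]
  rcases Nat.lt_or_ge (t + 1) L.length with h2 | h2
  · rw [Nat.mod_eq_of_lt h2, hL, List.getD_cons_succ,
      List.getD_append _ _ _ _ (by simp only [hL, List.length_cons] at ht h2 ⊢; omega)]
  · have hmod : (t + 1) % L.length = 0 := by
      have ht1 : t + 1 = L.length := by omega
      rw [ht1, Nat.mod_self]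
    rw [hmod, hL, List.getD_cons_zero,
      List.getD_append_right _ _ _ _ (by simp only [hL, List.length_cons] at ht h2 ⊢; omega)]
    have hz : t - M.length = 0 := by simp only [hL, List.length_cons] at ht h2; omega
    rw [hz]
    rfl

lemma orbit_core (g : ι → ι) (i₀ : ι) :
    ∃ p q : ℕ, p < q ∧ g^[q] i₀ = g^[p] i₀ ∧
      ∀ a b : ℕ, a < b → b < q → g^[a] i₀ ≠ g^[b] i₀ := by
  classical
  have hex : ∃ q, ∃ p, p < q ∧ g^[q] i₀ = g^[p] i₀ := by
    obtain ⟨a, b, hab, h⟩ := Finite.exists_ne_map_eq_of_infinite (fun t : ℕ => g^[t] i₀)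
    rcases hab.lt_or_gt with h' | h'
    exacts [⟨b, a, h', h.symm⟩, ⟨a, b, h', h⟩]
  obtain ⟨p, hpq, heq⟩ := Nat.find_spec hex
  refine ⟨p, Nat.find hex, hpq, heq, ?_⟩
  intro a b hab hb h
  exact Nat.find_min hex hb ⟨a, hab, h.symm⟩

lemma orbit_build (g : ι → ι) (i₀ : ι) (p q : ℕ) (hpq : p < q)
    (heq : g^[q] i₀ = g^[p] i₀)
    (hinj : ∀ a b : ℕ, a < b → b < q → g^[a] i₀ ≠ g^[b] i₀) :
    ∃ (L : List ι) (hne : L ≠ []), L.Nodup ∧ L.head hne = g^[p] i₀ ∧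
      (∀ x ∈ L, ∃ t, x = g^[t] i₀) ∧ ∀ x ∈ L, L.formPerm x = g x := by
  set k := q - p with hk
  have hk0 : 0 < k := by omega
  set L : List ι := List.ofFn (fun t : Fin k => g^[p + t] i₀) with hLdef
  have hlen : L.length = k := by simp [hLdef]
  have hget : ∀ (t : ℕ) (ht : t < L.length), L[t] = g^[p + t] i₀ := by
    intro t ht
    simp [hLdef]
  have hne : L ≠ [] := by
    intro h
    rw [h] at hlen
    simp at hlen
    omega
  have hnd : L.Nodup := by
    rw [hLdef, List.nodup_ofFn]
    intro a b hab
    by_contra hne'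
    rcases Ne.lt_or_gt (fun h : a = b => hne' (Fin.ext (by exact_mod_cast congrArg Fin.val h))) with h | h
    · exact hinj (p + a) (p + b) (by omega) (by omega) hab
    · exact hinj (p + b) (p + a) (by omega) (by omega) hab.symm
  refine ⟨L, hne, hnd, ?_, ?_, ?_⟩
  · rw [List.head_eq_getElem_zero, hget 0 (by omega)]
    simp
  · intro x hx
    obtain ⟨t, ht, rfl⟩ := List.mem_iff_getElem.mp hx
    exact ⟨p + t, (hget t ht).symm ▸ rfl⟩
  · intro x hx
    obtain ⟨t, ht, rfl⟩ := List.mem_iff_getElem.mp hx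
    rw [List.formPerm_apply_getElem _ hnd t ht, hget t ht, ← Function.iterate_succ_apply' g]
    rw [hget ((t + 1) % L.length) (Nat.mod_lt _ (by omega))]
    rcases Nat.lt_or_ge (t + 1) L.length with h2 | h2
    · rw [Nat.mod_eq_of_lt h2, Nat.add_succ]
    · have ht1 : t + 1 = L.length := by omega
      have hmod : (t + 1) % L.length = 0 := by rw [ht1, Nat.mod_self]
      rw [hmod]
      simp only [Nat.add_zero, Nat.succ_eq_add_one]
      have hq : p + t + 1 = q := by omega
      rw [hq]
      exact heq.symm

lemma orbit_list (g : ι → ι) (i₀ : ι) :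
    ∃ (L : List ι) (hne : L ≠ []), L.Nodup ∧
      (∀ x ∈ L, ∃ t, x = g^[t] i₀) ∧ ∀ x ∈ L, L.formPerm x = g x := by
  obtain ⟨p, q, hpq, heq, hinj⟩ := orbit_core g i₀
  obtain ⟨L, hne, hnd, _, helem, hfp⟩ := orbit_build g i₀ p q hpq heq hinj
  exact ⟨L, hne, hnd, helem, hfp⟩

lemma orbit_list_inj (g : ι → ι) (hg : Function.Injective g) (i₀ : ι) :
    ∃ (L : List ι) (hne : L ≠ []), L.Nodup ∧ L.head hne = i₀ ∧
      (∀ x ∈ L, ∃ t, x = g^[t] i₀) ∧ ∀ x ∈ L, L.formPerm x = g x := by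
  obtain ⟨p, q, hpq, heq, hinj⟩ := orbit_core g i₀
  have heq' : g^[q - p] i₀ = g^[0] i₀ := by
    have hinjp : Function.Injective (g^[p]) := Function.Injective.iterate hg p
    apply hinjp
    rw [← Function.iterate_add_apply, ← Function.iterate_add_apply]
    have h1 : p + (q - p) = q := by omega
    rw [h1]
    simpa using heq
  obtain ⟨L, hne, hnd, hhead, helem, hfp⟩ :=
    orbit_build g i₀ 0 (q - p) (by omega) heq' (fun a b hab hb => hinj a b hab (by omega))
  exact ⟨L, hne, hnd, by simpa using hhead, helem, hfp⟩

/-- RMax helpers -/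
lemma rmax_sum_ne_bot {γ : Type*} {s : Finset γ} {f : γ → RMax}
    (h : ∀ x ∈ s, f x ≠ ⊥) : ∑ x ∈ s, f x ≠ ⊥ := by
  rw [Ne, WithBot.sum_eq_bot_iff]
  push_neg
  exact h

lemma rmax_nsmul_bot {k : ℕ} (hk : 0 < k) : k • (⊥ : RMax) = ⊥ := by
  obtain ⟨m, rfl⟩ := Nat.exists_eq_succ_of_ne_zero (by omega : k ≠ 0)
  rw [succ_nsmul]
  exact WithBot.add_bot _

lemma rmax_smul_cancel {k : ℕ} (hk : 0 < k) {a : ℝ} {b : RMax}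
    (h : k • (a : RMax) ≤ k • b) : (a : RMax) ≤ b := by
  induction b using WithBot.recBotCoe with
  | bot =>
      rw [rmax_nsmul_bot hk, ← WithBot.coe_nsmul, le_bot_iff] at h
      exact absurd h (WithBot.coe_ne_bot)
  | coe r =>
      rw [← WithBot.coe_nsmul, ← WithBot.coe_nsmul, WithBot.coe_le_coe] at h
      rw [WithBot.coe_le_coe]
      rw [nsmul_eq_mul, nsmul_eq_mul] at h
      have hk' : (0 : ℝ) < (k : ℝ) := by exact_mod_cast hk
      exact le_of_mul_le_mul_left h hk'

lemma rmax_add_max (c a b : RMax) : c + max a b = max (c + a) (c + b) := by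
  rcases le_total a b with h | h
  · rw [max_eq_right h, max_eq_right (add_le_add_right h c)]
  · rw [max_eq_left h, max_eq_left (add_le_add_right h c)]

lemma rmax_add_sup_le {γ : Type*} {s : Finset γ} {f : γ → RMax} {c d : RMax}
    (h : ∀ a ∈ s, c + f a ≤ d) : c + s.sup f ≤ d := by
  rcases s.eq_empty_or_nonempty with rfl | hs
  · simp [WithBot.add_bot]
  · obtain ⟨a, ha, hsup⟩ := Finset.exists_mem_eq_sup s hs f
    rw [hsup]
    exact h a ha

lemma rmax_add_sup {γ : Type*} (s : Finset γ) (hs : s.Nonempty) (f : γ → RMax) (c : RMax) :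
    c + s.sup f = s.sup fun a => c + f a := by
  classical
  induction hs using Finset.Nonempty.cons_induction with
  | singleton a => simp
  | cons a s ha hs ih => rw [Finset.sup_cons, Finset.sup_cons, rmax_add_max, ih]

lemma mem_verts_perm (C : MultiCircuit ι) {i : ι} (hi : i ∈ C.verts) : C.perm i ∈ C.verts := by
  by_contra h
  have h2 := C.fixes _ h
  have h3 : C.perm i = i := C.perm.injective h2
  rw [h3] at h
  exact h hi

end AuxMachinery

section MainLemmas

set_option linter.unusedSectionVars false

open List

variable {ι : Type} [Fintype ι] [DecidableEq ι] [Nonempty ι]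

lemma eigen_le_mcm (A : Matrix ι ι RMax) (ρ : RMax) (hρ : IsMaxCycleMean A ρ)
    (l : RMax) (hl : IsEigen A l) : l ≤ ρ := by
  classical
  obtain ⟨w, hw0, hweq⟩ := hl
  rcases eq_or_ne l ⊥ with rfl | hlb
  · exact bot_le
  obtain ⟨μ, rfl⟩ := WithBot.ne_bot_iff_exists.mp hlb
  have hkey : ∀ i, w i ≠ ⊥ → ∃ j, w j ≠ ⊥ ∧ A i j + w j = ↑μ + w i := by
    intro i hi
    have h1 : Finset.univ.sup (fun j => A i j + w j) = ↑μ + w i := congrFun hweq i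
    obtain ⟨j, _, hj⟩ := Finset.exists_mem_eq_sup Finset.univ Finset.univ_nonempty
      (fun j => A i j + w j)
    rw [h1] at hj
    have hne : A i j + w j ≠ ⊥ := by
      rw [← hj]
      exact WithBot.add_ne_bot.mpr ⟨WithBot.coe_ne_bot, hi⟩
    exact ⟨j, (WithBot.add_ne_bot.mp hne).2, hj.symm⟩
  have hchoice : ∀ i : ι, ∃ j, w i ≠ ⊥ → w j ≠ ⊥ ∧ A i j + w j = ↑μ + w i := by
    intro i
    by_cases hi : w i ≠ ⊥
    · obtain ⟨j, h1, h2⟩ := hkey i hi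
      exact ⟨j, fun _ => ⟨h1, h2⟩⟩
    · exact ⟨i, fun h => (hi h).elim⟩
  choose g hg using hchoice
  have hsupp : ∃ i₀, w i₀ ≠ ⊥ := by
    by_contra h
    push_neg at h
    exact hw0 (funext fun i => h i)
  obtain ⟨i₀, hi₀⟩ := hsupp
  obtain ⟨L, hne, hnd, helem, hfp⟩ := orbit_list g i₀
  have hPit : ∀ t, w (g^[t] i₀) ≠ ⊥ := by
    intro t
    induction t with
    | zero => simpa using hi₀
    | succ t ih => rw [Function.iterate_succ_apply']; exact (hg _ ih).1
  have hPL : ∀ x ∈ L, w x ≠ ⊥ := by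
    intro x hx
    obtain ⟨t, rfl⟩ := helem x hx
    exact hPit t
  have hcirc : IsCircuit (listMC L) := listMC_isCircuit hnd hne
  have hing : InGraph A (listMC L) := by
    intro x hx
    have hx' := List.mem_toFinset.mp hx
    show A x (L.formPerm x) ≠ ⊥
    rw [hfp x hx']
    intro hbot
    have h2 := (hg x (hPL x hx')).2
    rw [hbot, WithBot.bot_add] at h2
    exact (WithBot.add_ne_bot.mpr ⟨WithBot.coe_ne_bot, hPL x hx'⟩) h2.symm
  have hsum : ∑ x ∈ L.toFinset, (A x (L.formPerm x) + w (L.formPerm x))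
      = ∑ x ∈ L.toFinset, ((↑μ : RMax) + w x) := by
    refine Finset.sum_congr rfl fun x hx => ?_
    rw [hfp x (List.mem_toFinset.mp hx)]
    exact (hg x (hPL x (List.mem_toFinset.mp hx))).2
  rw [Finset.sum_add_distrib, Finset.sum_add_distrib, Finset.sum_const] at hsum
  have hperm : ∑ x ∈ L.toFinset, w (L.formPerm x) = ∑ x ∈ L.toFinset, w x :=
    Equiv.Perm.sum_comp L.formPerm L.toFinset w (List.support_formPerm_le' L)
  rw [hperm] at hsum
  have hS : ∑ x ∈ L.toFinset, w x ≠ ⊥ :=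
    rmax_sum_ne_bot fun x hx => hPL x (List.mem_toFinset.mp hx)
  have hmc : mcWeight A (listMC L) = L.toFinset.card • (↑μ : RMax) :=
    WithBot.add_right_cancel hS hsum
  have hle := hρ.1 (listMC L) hcirc hing
  rw [hmc] at hle
  have hcard : 0 < (listMC L).verts.card := Finset.card_pos.mpr hcirc.1
  exact rmax_smul_cancel hcard hle

lemma no_circuit_eigen (A : Matrix ι ι RMax)
    (hno : ∀ D : MultiCircuit ι, IsCircuit D → ¬InGraph A D) :
    IsEigen A (⊥ : RMax) := by
  classical
  have hcol : ∃ j₀ : ι, ∀ i, A i j₀ = ⊥ := by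
    by_contra h
    push_neg at h
    choose g hgg using h
    obtain ⟨L, hne, hnd, helem, hfp⟩ := orbit_list g (Classical.arbitrary ι)
    set σ := L.formPerm with hσ
    have hfix : ∀ i, i ∉ L.toFinset → σ⁻¹ i = i := by
      intro i hi
      have h1 : σ i = i := List.formPerm_apply_of_notMem (by simpa using hi)
      exact Equiv.Perm.inv_eq_iff_eq.mpr h1.symm
    have hcirc : IsCircuit ⟨L.toFinset, σ⁻¹, hfix⟩ := by
      constructor
      · obtain ⟨x, hx⟩ := List.exists_mem_of_ne_nil L hne
        exact ⟨x, List.mem_toFinset.mpr hx⟩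
      · intro i hi j hj
        exact Equiv.Perm.sameCycle_inv.mpr
          (formPerm_sameCycle hnd i (List.mem_toFinset.mp hi) j (List.mem_toFinset.mp hj))
    have hing : InGraph A ⟨L.toFinset, σ⁻¹, hfix⟩ := by
      intro x hx
      show A x (σ⁻¹ x) ≠ ⊥
      have hxin : σ⁻¹ x ∈ L := by
        by_contra hxo
        have h1 : σ (σ⁻¹ x) = σ⁻¹ x := List.formPerm_apply_of_notMem (by simpa using hxo)
        rw [show σ (σ⁻¹ x) = x from Equiv.apply_symm_apply σ x] at h1
        rw [← h1] at hxo
        exact hxo (List.mem_toFinset.mp hx)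
      have h2 : g (σ⁻¹ x) = x := by
        rw [← hfp _ hxin]
        exact Equiv.apply_symm_apply σ x
      have h3 := hgg (σ⁻¹ x)
      rw [h2] at h3
      exact h3
    exact hno _ hcirc hing
  obtain ⟨j₀, hj₀⟩ := hcol
  refine ⟨fun i => if i = j₀ then (0 : RMax) else ⊥, ?_, ?_⟩
  · intro h
    have := congrFun h j₀
    simp [zeroV] at this
  · funext i
    have hterm : ∀ j : ι, A i j + (if j = j₀ then (0 : RMax) else ⊥) = ⊥ := by
      intro j
      by_cases hj : j = j₀
      · subst hj
        rw [hj₀ i, WithBot.bot_add]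
      · simp [hj, WithBot.add_bot]
    show Finset.univ.sup (fun j => A i j + _) = (⊥ : RMax) + _
    rw [WithBot.bot_add]
    simp only [hterm]
    simp

lemma mcm_eigen_coe (A : Matrix ι ι RMax) (μ : ℝ) (hρ : IsMaxCycleMean A (↑μ : RMax))
    (D : MultiCircuit ι) (hDc : IsCircuit D) (hDg : InGraph A D)
    (hDw : mcWeight A D = D.verts.card • (↑μ : RMax)) :
    IsEigen A (↑μ : RMax) := by
  classical
  set B : Matrix ι ι RMax := fun i j => A i j + (↑(-μ) : RMax) with hB
  have hmcB : ∀ C : MultiCircuit ι,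
      mcWeight B C = mcWeight A C + C.verts.card • (↑(-μ) : RMax) := by
    intro C
    show ∑ x ∈ C.verts, (A x (C.perm x) + (↑(-μ) : RMax)) = _
    rw [Finset.sum_add_distrib, Finset.sum_const]
    rfl
  have hcancel : (↑μ : RMax) + ↑(-μ) = 0 := by
    rw [← WithBot.coe_add, add_neg_cancel, WithBot.coe_zero]
  have hcle : ∀ C : MultiCircuit ι, IsCircuit C → InGraph A C → mcWeight B C ≤ 0 := by
    intro C hc hg
    rw [hmcB]
    calc mcWeight A C + C.verts.card • (↑(-μ) : RMax)
        ≤ C.verts.card • (↑μ : RMax) + C.verts.card • (↑(-μ) : RMax) :=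
          add_le_add_left (hρ.1 C hc hg) _
      _ = C.verts.card • ((↑μ : RMax) + ↑(-μ)) := (nsmul_add _ _ _).symm
      _ = 0 := by rw [hcancel, smul_zero]
  -- every closed walk has weight ≤ 0
  have hclosed : ∀ k (L : List ι) (v : ι), L.length = k → wtl B (v :: (L ++ [v])) ≤ 0 := by
    intro k
    induction k using Nat.strong_induction_on with
    | _ k ih =>
      intro L v hlen
      by_cases hnd : (v :: L).Nodup
      · have hw : mcWeight B (listMC (v :: L)) = wtl B ((v :: L) ++ [v]) :=
          mcWeight_listMC hnd v L rfl B
        by_cases hing : InGraph A (listMC (v :: L))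
        · have h1 := hcle _ (listMC_isCircuit hnd (List.cons_ne_nil _ _)) hing
          rw [hw] at h1
          exact h1
        · have hbot : mcWeight B (listMC (v :: L)) = ⊥ := by
            simp only [InGraph, not_forall] at hing
            obtain ⟨x, hx, hxe⟩ := hing
            have hxe' : A x ((listMC (v :: L)).perm x) = ⊥ := not_not.mp hxe
            apply WithBot.sum_eq_bot_iff.mpr
            exact ⟨x, hx, by show A x _ + _ = ⊥; rw [hxe', WithBot.bot_add]⟩
          rw [hbot] at hw
          rw [show (v : ι) :: (L ++ [v]) = (v :: L) ++ [v] from rfl, ← hw]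
          exact bot_le
      · obtain ⟨a, l1, l2, l3, hdec⟩ := exists_dup_split hnd
        have hlens : l1.length + l2.length + l3.length + 2 = k + 1 := by
          have h := congrArg List.length hdec
          simp only [List.length_cons, List.length_append] at h
          omega
        have hw1 : wtl B (v :: (L ++ [v])) =
            wtl B (l1 ++ [a]) + (wtl B (a :: (l2 ++ [a])) + wtl B (a :: (l3 ++ [v]))) := by
          have e0 : v :: (L ++ [v]) = l1 ++ (a :: ((l2 ++ (a :: l3)) ++ [v])) := by
            rw [show v :: (L ++ [v]) = (v :: L) ++ [v] from rfl, hdec]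
            simp
          have e1 : (l2 ++ (a :: l3)) ++ [v] = l2 ++ (a :: (l3 ++ [v])) := by simp
          rw [e0, wtl_split B a _ l1, e1]
          congr 1
          rw [show a :: (l2 ++ (a :: (l3 ++ [v]))) = (a :: l2) ++ (a :: (l3 ++ [v])) from rfl,
            wtl_split B a _ (a :: l2)]
          rfl
        have hmid : wtl B (a :: (l2 ++ [a])) ≤ 0 := ih l2.length (by omega) l2 a rfl
        have hnext : wtl B (v :: (L ++ [v])) ≤ wtl B (l1 ++ (a :: (l3 ++ [v]))) := by
          rw [hw1, wtl_split B a (l3 ++ [v]) l1]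
          apply add_le_add_right
          calc wtl B (a :: (l2 ++ [a])) + wtl B (a :: (l3 ++ [v]))
              ≤ 0 + wtl B (a :: (l3 ++ [v])) := add_le_add_left hmid _
            _ = _ := zero_add _
        rcases l1 with _ | ⟨b, l1'⟩
        · have hva : v = a := by
            simp only [List.nil_append] at hdec
            injection hdec with h1 _
          subst hva
          exact hnext.trans (ih l3.length (by omega) l3 v rfl)
        · have hvb : v = b := by
            rw [List.cons_append] at hdec
            injection hdec with h1 _
          subst hvb
          refine hnext.trans ?_
          have hlen1 : l1'.length + 1 + l2.length + l3.length + 2 = k + 1 := by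
            simpa using hlens
          have e3 : (v :: l1') ++ (a :: (l3 ++ [v])) = v :: ((l1' ++ (a :: l3)) ++ [v]) := by
            simp
          rw [e3]
          exact ih (l1' ++ (a :: l3)).length
            (by simp only [List.length_append, List.length_cons]; omega) _ v rfl
  -- the critical circuit as a walk
  obtain ⟨η, hη⟩ := hDc.1
  obtain ⟨LD, hneD, hndD, hheadD, helemD, hfpD⟩ :=
    orbit_list_inj (⇑D.perm) D.perm.injective η
  have hLDsub : ∀ x ∈ LD, x ∈ D.verts := by
    intro x hx
    obtain ⟨t, rfl⟩ := helemD x hx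
    clear hx
    induction t with
    | zero => simpa using hη
    | succ t ih2 =>
        rw [Function.iterate_succ_apply']
        exact mem_verts_perm D ih2
  have hηLD : η ∈ LD := by
    have h1 := List.head_mem hneD
    rw [hheadD] at h1
    exact h1
  have hclos : ∀ t, (⇑D.perm)^[t] η ∈ LD := by
    intro t
    induction t with
    | zero => simpa using hηLD
    | succ t ih2 =>
        rw [Function.iterate_succ_apply', ← hfpD _ ih2]
        exact List.formPerm_apply_mem_of_mem ih2
  have hTD : LD.toFinset = D.verts := by
    apply Finset.Subset.antisymm
    · intro x hx
      exact hLDsub x (List.mem_toFinset.mp hx)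
    · intro j hj
      obtain ⟨i, _, _, hieq⟩ := (hDc.2 η hη j hj).exists_pow_eq D.perm
      have hiter : (⇑D.perm)^[i] η = j := by
        rw [Equiv.Perm.iterate_eq_pow]
        exact hieq
      rw [← hiter]
      exact List.mem_toFinset.mpr (hclos i)
  have hcrit0 : wtl B (LD ++ [η]) = 0 := by
    have h1 : mcWeight B (listMC LD) = wtl B (LD ++ [LD.head hneD]) :=
      mcWeight_listMC hndD (LD.head hneD) LD.tail (List.cons_head_tail hneD).symm B
    rw [hheadD] at h1
    have h2 : mcWeight B (listMC LD) = mcWeight B D := by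
      show ∑ x ∈ LD.toFinset, B x (LD.formPerm x) = ∑ x ∈ D.verts, B x (D.perm x)
      refine Finset.sum_congr hTD fun x hx => ?_
      rw [hfpD x (List.mem_toFinset.mp (hTD ▸ hx))]
    have h3 : mcWeight B D = 0 := by
      rw [hmcB, hDw, ← nsmul_add, hcancel, smul_zero]
    rw [← h1, h2, h3]
  -- the candidate eigenvector
  set N : ℕ := Fintype.card ι + 1 with hN
  set xv : Vec ι := fun i => (Finset.range N).sup
      (fun k => (Finset.univ : Finset (Fin k → ι)).sup
        (fun f => wtl B (i :: (List.ofFn f ++ [η])))) with hxv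
  have hxvi : ∀ i, xv i = (Finset.range N).sup
      (fun k => (Finset.univ : Finset (Fin k → ι)).sup
        (fun f => wtl B (i :: (List.ofFn f ++ [η])))) := fun i => rfl
  have hR : ∀ k (l : List ι) (i : ι), l.length = k → wtl B (i :: (l ++ [η])) ≤ xv i := by
    intro k
    induction k using Nat.strong_induction_on with
    | _ k ih =>
      intro l i hlen
      rcases Nat.lt_or_ge k N with hk | hk
      · subst hlen
        have h1 : wtl B (i :: (l ++ [η])) ≤ (Finset.univ : Finset (Fin l.length → ι)).sup
            (fun f => wtl B (i :: (List.ofFn f ++ [η]))) := by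
          have h2 := Finset.le_sup (f := fun f : Fin l.length → ι =>
            wtl B (i :: (List.ofFn f ++ [η]))) (Finset.mem_univ l.get)
          simpa [List.ofFn_get] using h2
        refine h1.trans ?_
        show _ ≤ xv i
        rw [hxvi i]
        exact Finset.le_sup (f := fun k => (Finset.univ : Finset (Fin k → ι)).sup
          (fun f => wtl B (i :: (List.ofFn f ++ [η])))) (Finset.mem_range.mpr hk)
      · have hndf : ¬ (i :: l).Nodup := by
          intro hnd
          have h1 := hnd.length_le_card
          simp only [List.length_cons, hlen] at h1
          omega
        obtain ⟨a, l1, l2, l3, hdec⟩ := exists_dup_split hndf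
        have hlens : l1.length + l2.length + l3.length + 2 = k + 1 := by
          have h := congrArg List.length hdec
          simp only [List.length_cons, List.length_append, hlen] at h
          omega
        have hw1 : wtl B (i :: (l ++ [η])) =
            wtl B (l1 ++ [a]) + (wtl B (a :: (l2 ++ [a])) + wtl B (a :: (l3 ++ [η]))) := by
          have e0 : i :: (l ++ [η]) = l1 ++ (a :: ((l2 ++ (a :: l3)) ++ [η])) := by
            rw [show i :: (l ++ [η]) = (i :: l) ++ [η] from rfl, hdec]
            simp
          have e1 : (l2 ++ (a :: l3)) ++ [η] = l2 ++ (a :: (l3 ++ [η])) := by simp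
          rw [e0, wtl_split B a _ l1, e1]
          congr 1
          rw [show a :: (l2 ++ (a :: (l3 ++ [η]))) = (a :: l2) ++ (a :: (l3 ++ [η])) from rfl,
            wtl_split B a _ (a :: l2)]
          rfl
        have hmid : wtl B (a :: (l2 ++ [a])) ≤ 0 := hclosed l2.length l2 a rfl
        have hnext : wtl B (i :: (l ++ [η])) ≤ wtl B (l1 ++ (a :: (l3 ++ [η]))) := by
          rw [hw1, wtl_split B a (l3 ++ [η]) l1]
          apply add_le_add_right
          calc wtl B (a :: (l2 ++ [a])) + wtl B (a :: (l3 ++ [η]))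
              ≤ 0 + wtl B (a :: (l3 ++ [η])) := add_le_add_left hmid _
            _ = _ := zero_add _
        rcases l1 with _ | ⟨b, l1'⟩
        · have hia : i = a := by
            simp only [List.nil_append] at hdec
            injection hdec with h1 _
          subst hia
          exact hnext.trans (ih l3.length (by omega) l3 i rfl)
        · have hib : i = b := by
            rw [List.cons_append] at hdec
            injection hdec with h1 _
          subst hib
          refine hnext.trans ?_
          have hlen1 : l1'.length + 1 + l2.length + l3.length + 2 = k + 1 := by
            simpa using hlens
          have e3 : (i :: l1') ++ (a :: (l3 ++ [η])) = i :: ((l1' ++ (a :: l3)) ++ [η]) := by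
            simp
          rw [e3]
          exact ih (l1' ++ (a :: l3)).length
            (by simp only [List.length_append, List.length_cons]; omega) _ i rfl
  have hx0 : (0 : RMax) ≤ xv η := by
    have h1 := hR LD.tail.length LD.tail η rfl
    have h2 : η :: (LD.tail ++ [η]) = LD ++ [η] := by
      conv_rhs => rw [← List.cons_head_tail hneD]
      rw [hheadD]
      rfl
    rw [h2, hcrit0] at h1
    exact h1
  have hfix : ∀ i, Finset.univ.sup (fun j => B i j + xv j) = xv i := by
    intro i
    apply _root_.le_antisymm
    · apply Finset.sup_le
      intro j _
      show B i j + xv j ≤ xv i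
      rw [hxvi j]
      apply rmax_add_sup_le
      intro k _
      apply rmax_add_sup_le
      intro f _
      have h1 : B i j + wtl B (j :: (List.ofFn f ++ [η]))
          = wtl B (i :: ((j :: List.ofFn f) ++ [η])) := by
        rw [List.cons_append, wtl_cons_cons]
      rw [h1]
      exact hR _ _ i rfl
    · show xv i ≤ _
      rw [hxvi i]
      apply Finset.sup_le
      intro k _
      apply Finset.sup_le
      intro f _
      match k, f with
      | 0, f =>
          have h0 : List.ofFn f = [] := List.ofFn_zero
          rw [h0]
          have h1 : wtl B (i :: ([] ++ [η])) = B i η := by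
            show wtl B [i, η] = B i η
            rw [wtl_cons_cons, wtl_single, add_zero]
          rw [h1]
          calc B i η = B i η + 0 := (add_zero _).symm
            _ ≤ B i η + xv η := add_le_add_right hx0 _
            _ ≤ _ := Finset.le_sup (f := fun j => B i j + xv j) (Finset.mem_univ η)
      | (m + 1), f =>
          have hsplit : i :: (List.ofFn f ++ [η])
              = i :: (f 0) :: (List.ofFn (fun t : Fin m => f t.succ) ++ [η]) := by
            rw [List.ofFn_succ]
            rfl
          rw [hsplit, wtl_cons_cons]
          calc B i (f 0) + wtl B (f 0 :: (List.ofFn (fun t : Fin m => f t.succ) ++ [η]))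
              ≤ B i (f 0) + xv (f 0) := add_le_add_right (hR _ _ _ rfl) _
            _ ≤ _ := Finset.le_sup (f := fun j => B i j + xv j) (Finset.mem_univ (f 0))
  refine ⟨xv, ?_, ?_⟩
  · intro h
    have h1 := congrFun h η
    rw [h1] at hx0
    exact absurd hx0 (by simp [zeroV])
  · funext i
    show Finset.univ.sup (fun j => A i j + xv j) = (↑μ : RMax) + xv i
    have hAB : ∀ j, A i j + xv j = ↑μ + (B i j + xv j) := by
      intro j
      show A i j + xv j = ↑μ + (A i j + ↑(-μ) + xv j)
      have h1 : (↑μ : RMax) + (A i j + ↑(-μ) + xv j) = (↑μ + ↑(-μ)) + (A i j + xv j) := by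
        abel
      rw [h1, hcancel, zero_add]
    rw [Finset.sup_congr rfl (fun j _ => hAB j), ← rmax_add_sup _ Finset.univ_nonempty, hfix i]

end MainLemmas

/-! ## Statement 17 -/
theorem maxCycleMean_is_max_eigenvalue {n : ℕ}
    (A : Matrix (Fin (n + 1)) (Fin (n + 1)) RMax) (ρ : RMax)
    (hρ : IsMaxCycleMean A ρ) :
    IsEigen A ρ ∧ ∀ l : RMax, IsEigen A l → l ≤ ρ := by
  constructor
  · rcases eq_or_ne ρ ⊥ with rfl | hρb
    · apply no_circuit_eigen
      rcases hρ.2 with ⟨D, hDc, hDg, hDw⟩ | ⟨_, hno⟩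
      · exfalso
        have hne : mcWeight A D ≠ ⊥ := rmax_sum_ne_bot fun x hx => hDg x hx
        rw [hDw, rmax_nsmul_bot (Finset.card_pos.mpr hDc.1)] at hne
        exact hne rfl
      · exact hno
    · obtain ⟨μ, rfl⟩ := WithBot.ne_bot_iff_exists.mp hρb
      rcases hρ.2 with ⟨D, hDc, hDg, hDw⟩ | ⟨hb, _⟩
      · exact mcm_eigen_coe A μ hρ D hDc hDg hDw
      · exact absurd hb WithBot.coe_ne_bot
  · exact fun l hl => eigen_le_mcm A ρ hρ l hl
end
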